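/- arXiv:2401.01890 — 6 statements merged into one kernel-verified Lean document; each statement's English description precedes it below -/
import Mathlib

section
/- The binary operation ⋋ on planar binary rooted trees, defined by t ⋋ w = w ∘₁ (t ∨ |) (grafting the tree t ∨ | onto the leftmost leaf of w), with the empty tree as unit, is associative. -/
open Classical

/-- Planar binary rooted trees. `leaf` is the unique tree `|` with one leaf. -/
inductive PBT : Type
  | leaf : PBT
  | node : PBT → PBT → PBT
  deriving DecidableEq

/-- Number of leaves of a planar binary rooted tree. -/
def leavesCount : PBT → ℕ
  | .leaf => 1
  | .node l r => leavesCount l + leavesCount r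

/-- Graft the tree `w` onto the leftmost (first) leaf of `t`. -/
def graft1 : PBT → PBT → PBT
  | .leaf, w => w
  | .node l r, w => .node (graft1 l w) r

/-- The product `t ⋋ w := w ∘₁ (t ∨ |)`. -/
def lprod (t w : PBT) : PBT := graft1 w (.node t .leaf)

/-- A tree is `⋋`-irreducible if it is not a product of two (nonempty) trees. -/
def Irr (t : PBT) : Prop := ¬ ∃ u w : PBT, t = lprod u w

/-- `⋋` extended to the free monoid with the empty tree (`none`) as unit. -/
def olprod : Option PBT → Option PBT → Option PBT
  | none, b => b
  | a, none => a
  | some t, some w => some (lprod t w)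

theorem graft1_assoc (a b c : PBT) : graft1 (graft1 a b) c = graft1 a (graft1 b c) := by
  induction a with
  | leaf => rfl
  | node l r ih => simp [graft1, ih]

/-- The operation `⋋`, with the empty tree as unit, is associative. -/
theorem stmt0 (a b c : Option PBT) :
    olprod (olprod a b) c = olprod a (olprod b c) := by
  cases a <;> cases b <;> cases c <;>
    simp only [olprod, lprod, graft1_assoc, graft1]
end

section
/- Every planar binary rooted tree t with at least one leaf can be written uniquely as t = t₁ ⋋ t₂ ⋋ ⋯ ⋋ t_r for a unique positive integer r and a unique family of ⋋-irreducible trees t₁, …, t_r. -/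
open Classical

lemma lprod_leaf (u : PBT) : lprod u .leaf = .node u .leaf := rfl

lemma lprod_node (u l r : PBT) : lprod u (.node l r) = .node (lprod u l) r := rfl

lemma leavesCount_pos (t : PBT) : 0 < leavesCount t := by
  induction t with
  | leaf => simp [leavesCount]
  | node l r ihl ihr => simp only [leavesCount]; omega

lemma leavesCount_lprod (u w : PBT) :
    leavesCount (lprod u w) = leavesCount u + leavesCount w := by
  induction w with
  | leaf => simp [lprod_leaf, leavesCount]
  | node l r ihl ihr =>
    rw [lprod_node]
    simp only [leavesCount] at *
    omega

lemma graft1_assoc_s2 (x y z : PBT) : graft1 (graft1 x y) z = graft1 x (graft1 y z) := by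
  induction x with
  | leaf => rfl
  | node l r ihl ihr => simp [graft1, ihl]

lemma lprod_assoc (u a b : PBT) : lprod u (lprod a b) = lprod (lprod u a) b := by
  unfold lprod
  rw [graft1_assoc_s2]
  rfl

lemma split_unique : ∀ w u w' u', Irr w → Irr w' → lprod u w = lprod u' w' →
    u = u' ∧ w = w' := by
  intro w
  induction w with
  | leaf =>
    intro u w' u' _ hw' h
    cases w' with
    | leaf =>
      rw [lprod_leaf, lprod_leaf] at h
      injection h with h1 h2
      exact ⟨h1, rfl⟩
    | node l' r' =>
      rw [lprod_leaf, lprod_node] at h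
      injection h with h1 h2
      exact absurd ⟨l', .leaf, by rw [← h2, lprod_leaf]⟩ hw'
  | node l r ihl ihr =>
    intro u w' u' hw hw' h
    cases w' with
    | leaf =>
      rw [lprod_node, lprod_leaf] at h
      injection h with h1 h2
      exact absurd ⟨l, .leaf, by rw [h2, lprod_leaf]⟩ hw
    | node l' r' =>
      rw [lprod_node, lprod_node] at h
      injection h with h1 h2
      have hl : Irr l := fun ⟨a, b, hab⟩ => hw ⟨a, .node b r, by rw [hab, lprod_node]⟩
      have hl' : Irr l' := fun ⟨a, b, hab⟩ => hw' ⟨a, .node b r', by rw [hab, lprod_node]⟩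
      obtain ⟨e1, e2⟩ := ihl u l' u' hl hl' h1
      exact ⟨e1, by rw [e2, h2]⟩

lemma split_exists : ∀ n u w, leavesCount w ≤ n →
    ∃ u' w', Irr w' ∧ lprod u w = lprod u' w' := by
  intro n
  induction n with
  | zero => intro u w h; exact absurd h (by have := leavesCount_pos w; omega)
  | succ n ih =>
    intro u w h
    by_cases hw : Irr w
    · exact ⟨u, w, hw, rfl⟩
    · obtain ⟨a, b, hab⟩ := not_not.mp hw
      subst hab
      have hb : leavesCount b ≤ n := by
        have h1 := leavesCount_lprod a b
        have h2 := leavesCount_pos a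
        omega
      obtain ⟨u', w', h1, h2⟩ := ih (lprod u a) b hb
      exact ⟨u', w', h1, by rw [lprod_assoc, h2]⟩

lemma fact_exists : ∀ n t, leavesCount t ≤ n →
    ∃ p : PBT × List PBT,
      (∀ s ∈ p.1 :: p.2, Irr s) ∧ List.foldl lprod p.1 p.2 = t := by
  intro n
  induction n with
  | zero => intro t h; exact absurd h (by have := leavesCount_pos t; omega)
  | succ n ih =>
    intro t h
    by_cases ht : Irr t
    · exact ⟨(t, []), by simpa using ht, rfl⟩
    · obtain ⟨a, b, hab⟩ := not_not.mp ht
      obtain ⟨u', w', hirr, heq⟩ := split_exists (leavesCount b) a b le_rfl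
      have hcount : leavesCount u' ≤ n := by
        have h1 : leavesCount t = leavesCount u' + leavesCount w' := by
          rw [hab, heq, leavesCount_lprod]
        have h2 := leavesCount_pos w'
        omega
      obtain ⟨p, hp1, hp2⟩ := ih u' hcount
      refine ⟨(p.1, p.2 ++ [w']), ?_, ?_⟩
      · intro s hs
        simp only [List.mem_cons, List.mem_append, List.mem_singleton] at hs
        rcases hs with h1 | h1 | h1 | h1
        · exact hp1 s (by simp [h1])
        · exact hp1 s (by simp [h1])
        · rwa [h1]
        · exact absurd h1 List.not_mem_nil
      · show List.foldl lprod p.1 (p.2 ++ [w']) = t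
        rw [List.foldl_append, hp2]
        show lprod u' w' = t
        rw [hab, heq]

lemma fact_unique : ∀ n (p q : PBT × List PBT),
    (∀ s ∈ p.1 :: p.2, Irr s) → (∀ s ∈ q.1 :: q.2, Irr s) →
    List.foldl lprod p.1 p.2 = List.foldl lprod q.1 q.2 →
    leavesCount (List.foldl lprod p.1 p.2) ≤ n → p = q := by
  intro n
  induction n with
  | zero =>
    intro p q _ _ _ h
    exact absurd h (by have := leavesCount_pos (List.foldl lprod p.1 p.2); omega)
  | succ n ih =>
    rintro ⟨p1, p2⟩ ⟨q1, q2⟩ hp hq heq hn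
    rcases List.eq_nil_or_concat p2 with hp2 | ⟨l, w, hp2⟩ <;>
      rcases List.eq_nil_or_concat q2 with hq2 | ⟨l', w', hq2⟩ <;>
      simp only [List.concat_eq_append] at *
    · subst hp2; subst hq2
      simp only [List.foldl_nil] at heq
      rw [heq]
    · subst hp2; subst hq2
      simp only [List.foldl_nil] at heq
      rw [List.foldl_concat] at heq
      exact absurd ⟨List.foldl lprod q1 l', w', heq⟩ (hp p1 (by simp))
    · subst hp2; subst hq2
      simp only [List.foldl_nil] at heq
      rw [List.foldl_concat] at heq
      exact absurd ⟨List.foldl lprod p1 l, w, heq.symm⟩ (hq q1 (by simp))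
    · subst hp2; subst hq2
      simp only [List.foldl_append, List.foldl_cons, List.foldl_nil] at heq hn
      have hw : Irr w := hp w (by simp)
      have hw' : Irr w' := hq w' (by simp)
      obtain ⟨e1, e2⟩ := split_unique w (List.foldl lprod p1 l) w'
        (List.foldl lprod q1 l') hw hw' heq
      have hn' : leavesCount (List.foldl lprod p1 l) ≤ n := by
        have h1 := leavesCount_lprod (List.foldl lprod p1 l) w
        have h2 := leavesCount_pos w
        omega
      have := ih (p1, l) (q1, l')
        (fun s hs => hp s (by
          simp only [List.mem_cons] at hs ⊢
          rcases hs with h | h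
          · exact Or.inl h
          · exact Or.inr (by simp [h])))
        (fun s hs => hq s (by
          simp only [List.mem_cons] at hs ⊢
          rcases hs with h | h
          · exact Or.inl h
          · exact Or.inr (by simp [h])))
        e1 hn'
      obtain ⟨h1, h2⟩ := Prod.mk.injEq .. ▸ this
      simp only [Prod.mk.injEq] at this
      rw [this.1, this.2, e2]

/-- Every planar binary rooted tree factors uniquely as
`t = t₁ ⋋ t₂ ⋋ ⋯ ⋋ t_r` with each `tᵢ` being `⋋`-irreducible.
The factorization is encoded as a nonempty list `p.1 :: p.2`. -/
theorem stmt2 (t : PBT) :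
    ∃! p : PBT × List PBT,
      (∀ s ∈ p.1 :: p.2, Irr s) ∧ List.foldl lprod p.1 p.2 = t := by
  obtain ⟨p, hp1, hp2⟩ := fact_exists (leavesCount t) t le_rfl
  refine ⟨p, ⟨hp1, hp2⟩, ?_⟩
  rintro q ⟨hq1, hq2⟩
  exact fact_unique (leavesCount t) q p hq1 hp1 (by rw [hp2, hq2])
    (by rw [hq2])
end

section
/- Let (P, ≤) be a finite lattice and P′ ⊆ P a subset closed under binary infima. Suppose p₀ ∈ P′ is such that every element covered by p₀ belongs to P′. Then the Möbius function satisfies μ(q, p₀) = 0 for every q ∉ P′. -/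
/-- Let `P` be a finite lattice, `P'` a subset closed under binary infima and
`p₀ ∈ P'` an element such that every element covered by `p₀` belongs to `P'`.
Then the Möbius function `μ` of `P` (defined by `μ p p = 1`,
`Σ_{p ≤ z ≤ q} μ z q = 0` for `p < q`, and `μ p q = 0` when `¬ p ≤ q`)
satisfies `μ q p₀ = 0` for every `q ∉ P'`. -/
theorem stmt6 {P : Type*} [Fintype P] [Lattice P]
    [DecidableRel (α := P) (· ≤ ·)]
    (P' : Set P)
    (hinf : ∀ a ∈ P', ∀ b ∈ P', a ⊓ b ∈ P')
    (p₀ : P) (hp₀ : p₀ ∈ P')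
    (hcov : ∀ q : P, q ⋖ p₀ → q ∈ P')
    (μ : P → P → ℤ)
    (hμrefl : ∀ p : P, μ p p = 1)
    (hμzero : ∀ p q : P, ¬ p ≤ q → μ p q = 0)
    (hμsum : ∀ p q : P, p < q →
      (∑ z ∈ Finset.univ.filter (fun z => p ≤ z ∧ z ≤ q), μ z q) = 0) :
    ∀ q : P, q ∉ P' → μ q p₀ = 0 := by
  classical
  intro q
  refine (wellFounded_gt (α := P)).induction (C := fun q => q ∉ P' → μ q p₀ = 0) q ?_
  intro q IH hq
  by_cases hle : q ≤ p₀
  · have hne : q ≠ p₀ := fun h => hq (h ▸ hp₀)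
    have hlt : q < p₀ := lt_of_le_of_ne hle hne
    -- find an element covered by p₀ above q
    set S : Finset P := Finset.univ.filter (fun w => q ≤ w ∧ w < p₀) with hS
    have hqS : q ∈ S := by simp [hS, hlt]
    obtain ⟨z, hzS, hzmax⟩ : ∃ i ∈ S, ∀ x ∈ S, ¬ i < x := by
      obtain ⟨z, hz⟩ := Finset.exists_maximal (s := S) ⟨q, hqS⟩
      exact ⟨z, hz.1, fun x hx hzx => hzx.not_ge (hz.2 hx hzx.le)⟩
    simp only [hS, Finset.mem_filter, Finset.mem_univ, true_and] at hzS
    have hzcov : z ⋖ p₀ := by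
      refine ⟨hzS.2, fun w hzw hwp => ?_⟩
      exact hzmax w (by simp [hS, le_trans hzS.1 hzw.le, hwp]) hzw
    have hzP' : z ∈ P' := hcov z hzcov
    -- minimum of P' ∩ [q, p₀]
    set T : Finset P := Finset.univ.filter (fun a => a ∈ P' ∧ q ≤ a ∧ a ≤ p₀) with hT
    have hzT : z ∈ T := by simp [hT, hzP', hzS.1, hzS.2.le]
    have hTne : T.Nonempty := ⟨z, hzT⟩
    set c : P := T.inf' hTne id with hc
    have hcT : ∀ a ∈ T, a ∈ P' ∧ q ≤ a ∧ a ≤ p₀ := by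
      intro a ha; simpa [hT] using ha
    have hcP' : c ∈ P' := by
      refine Finset.inf'_mem P' (fun x hx y hy => hinf x hx y hy) _ hTne id
        (fun i hi => (hcT i hi).1)
    have hqc : q ≤ c := Finset.le_inf' hTne id (fun a ha => (hcT a ha).2.1)
    have hcz : c ≤ z := Finset.inf'_le id hzT
    have hcp : c < p₀ := lt_of_le_of_lt hcz hzcov.1
    have hqc' : q < c := lt_of_le_of_ne hqc (fun h => hq (h ▸ hcP'))
    have hcmin : ∀ a ∈ P', q ≤ a → a ≤ p₀ → c ≤ a := by
      intro a ha h1 h2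
      exact Finset.inf'_le id (by simp [hT, ha, h1, h2])
    -- the two sums
    have hA := hμsum q p₀ hlt
    have hB := hμsum c p₀ hcp
    set A : Finset P := Finset.univ.filter (fun w => q ≤ w ∧ w ≤ p₀) with hAdef
    set B : Finset P := Finset.univ.filter (fun w => c ≤ w ∧ w ≤ p₀) with hBdef
    have hqA : q ∈ A := by simp [hAdef, hle]
    have hBsub : B ⊆ A.erase q := by
      intro w hw
      simp only [hBdef, Finset.mem_filter, Finset.mem_univ, true_and] at hw
      refine Finset.mem_erase.2 ⟨?_, by simp [hAdef, le_trans hqc hw.1, hw.2]⟩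
      exact fun h => absurd (h ▸ hw.1 : c ≤ q) hqc'.not_ge
    have hvanish : ∀ w ∈ A.erase q, w ∉ B → μ w p₀ = 0 := by
      intro w hw hwB
      rw [Finset.mem_erase] at hw
      simp only [hAdef, Finset.mem_filter, Finset.mem_univ, true_and] at hw
      have hwq : q < w := lt_of_le_of_ne hw.2.1 (Ne.symm hw.1)
      refine IH w hwq (fun hwP' => hwB ?_)
      simp [hBdef, hcmin w hwP' hw.2.1 hw.2.2, hw.2.2]
    have hsum_eq : ∑ w ∈ A.erase q, μ w p₀ = ∑ w ∈ B, μ w p₀ :=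
      (Finset.sum_subset hBsub (fun w hw hwB => hvanish w hw hwB)).symm
    have hsplit : ∑ w ∈ A, μ w p₀ = μ q p₀ + ∑ w ∈ A.erase q, μ w p₀ :=
      (Finset.add_sum_erase A (fun w => μ w p₀) hqA).symm
    rw [hsplit, hsum_eq, hB, add_zero] at hA
    exact hA
  · exact hμzero q p₀ hle
end

section
/- In the Tamari lattice on trees with n leaves, if t ≤ w with t = t₀ ∘ (t₁,…,t_r) and w = w₀ ∘ (w₁,…,w_r) where t₀, w₀ have r leaves and tᵢ, wᵢ have nᵢ leaves for each i, then t₀ ≤ w₀ and tᵢ ≤ wᵢ for all 1 ≤ i ≤ r. -/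
open Classical

/-- One covering move of the Tamari order: a right rotation
`(a ∨ b) ∨ c ↦ a ∨ (b ∨ c)` applied at some internal node. -/
inductive TStep : PBT → PBT → Prop
  | rot (a b c : PBT) : TStep (.node (.node a b) c) (.node a (.node b c))
  | left {a a' : PBT} (c : PBT) : TStep a a' → TStep (.node a c) (.node a' c)
  | right (a : PBT) {c c' : PBT} : TStep c c' → TStep (.node a c) (.node a c')

/-- The Tamari order on planar binary rooted trees: the reflexive transitive
closure of the rotation moves. -/
def tle : PBT → PBT → Prop := Relation.ReflTransGen TStep

/-- Auxiliary function: graft trees from the list `ws` onto the leaves of `t`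
from left to right, returning the resulting tree and the unused trees. -/
def graftAux : PBT → List PBT → PBT × List PBT
  | .leaf, [] => (.leaf, [])
  | .leaf, w :: ws => (w, ws)
  | .node l r, ws =>
      let p := graftAux l ws
      let q := graftAux r p.2
      (.node p.1 q.1, q.2)

/-- The grafting `t ∘ (w₁, …, w_r)`: graft the trees of the list `ws`
onto the leaves of `t`, from left to right. -/
def graftMany (t : PBT) (ws : List PBT) : PBT := (graftAux t ws).1


lemma one_le_leaves (t : PBT) : 1 ≤ leavesCount t := by
  induction t with
  | leaf => simp [leavesCount]
  | node l r ihl ihr => simp only [leavesCount]; omega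

lemma leaves_eq_one {t : PBT} (h : leavesCount t = 1) : t = .leaf := by
  cases t with
  | leaf => rfl
  | node l r =>
    have := one_le_leaves l; have := one_le_leaves r
    simp [leavesCount] at h; omega

/-- Bracketing vector: entry `i` (0-based) is the number of leaves of the
maximal subtree whose leftmost leaf is leaf `i+2` (1-based). -/
def v : PBT → List ℕ
  | .leaf => []
  | .node l r => v l ++ (leavesCount r :: v r)

lemma v_length (t : PBT) : (v t).length = leavesCount t - 1 := by
  induction t with
  | leaf => simp [v, leavesCount]
  | node l r ihl ihr =>
    have := one_le_leaves l; have := one_le_leaves r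
    simp [v, leavesCount, ihl, ihr]; omega

lemma v_node_lt {l : PBT} (r : PBT) {i : ℕ} (h : i + 1 < leavesCount l) :
    (v (.node l r)).getD i 0 = (v l).getD i 0 := by
  have hl := v_length l
  rw [show v (.node l r) = v l ++ (leavesCount r :: v r) from rfl,
    List.getD_append _ _ _ _ (by omega)]

lemma v_node_eq (l r : PBT) :
    (v (.node l r)).getD (leavesCount l - 1) 0 = leavesCount r := by
  have hl := v_length l
  rw [show v (.node l r) = v l ++ (leavesCount r :: v r) from rfl,
    List.getD_append_right _ _ _ _ (by omega)]
  simp [hl]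

lemma v_node_ge (l r : PBT) (i : ℕ) :
    (v (.node l r)).getD (leavesCount l + i) 0 = (v r).getD i 0 := by
  have hl := v_length l
  have h1 := one_le_leaves l
  rw [show v (.node l r) = v l ++ (leavesCount r :: v r) from rfl,
    List.getD_append_right _ _ _ _ (by omega)]
  have : leavesCount l + i - (v l).length = i + 1 := by omega
  rw [this]
  simp

lemma v_bound (t : PBT) (i : ℕ) : (v t).getD i 0 ≤ leavesCount t - 1 - i := by
  induction t generalizing i with
  | leaf => simp [v]
  | node l r ihl ihr =>
    have hl := one_le_leaves l; have hr := one_le_leaves r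
    rcases lt_trichotomy (i+1) (leavesCount l) with h | h | h
    · rw [v_node_lt r h]
      have := ihl i
      simp only [leavesCount]; omega
    · have : i = leavesCount l - 1 := by omega
      rw [this, v_node_eq]
      simp only [leavesCount]; omega
    · have hi : i = leavesCount l + (i - leavesCount l) := by omega
      rw [hi, v_node_ge]
      have := ihr (i - leavesCount l)
      simp only [leavesCount]; omega

lemma TStep.leaves {t t' : PBT} (h : TStep t t') : leavesCount t = leavesCount t' := by
  induction h with
  | rot a b c => simp only [leavesCount]; omega
  | left c _ ih => simp [leavesCount, ih]
  | right a _ ih => simp [leavesCount, ih]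

lemma tle.leaves {t t' : PBT} (h : tle t t') : leavesCount t = leavesCount t' := by
  induction h with
  | refl => rfl
  | tail _ h ih => exact ih.trans h.leaves

lemma forall₂_le_refl (l : List ℕ) : List.Forall₂ (· ≤ ·) l l :=
  List.forall₂_same.mpr (fun _ _ => le_refl _)

lemma forall₂_append {R : ℕ → ℕ → Prop} {l1 l2 l3 l4 : List ℕ} (h : List.Forall₂ R l1 l2)
    (h2 : List.Forall₂ R l3 l4) : List.Forall₂ R (l1 ++ l3) (l2 ++ l4) := by
  induction h with
  | nil => exact h2
  | cons hh _ ih => exact List.Forall₂.cons hh ih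

lemma TStep.vle {t t' : PBT} (h : TStep t t') : List.Forall₂ (· ≤ ·) (v t) (v t') := by
  induction h with
  | rot a b c =>
    show List.Forall₂ _ ((v a ++ (leavesCount b :: v b)) ++ (leavesCount c :: v c))
      (v a ++ ((leavesCount b + leavesCount c) :: (v b ++ (leavesCount c :: v c))))
    rw [List.append_assoc, List.cons_append]
    exact forall₂_append (forall₂_le_refl _)
      (List.Forall₂.cons (by omega) (forall₂_le_refl _))
  | left c _ ih =>
    exact forall₂_append ih (forall₂_le_refl _)
  | @right a c c' h ih =>
    exact forall₂_append (forall₂_le_refl _)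
      (List.Forall₂.cons (le_of_eq h.leaves) ih)

lemma forall₂_le_trans {l1 l2 l3 : List ℕ} (h1 : List.Forall₂ (· ≤ ·) l1 l2)
    (h2 : List.Forall₂ (· ≤ ·) l2 l3) : List.Forall₂ (· ≤ ·) l1 l3 := by
  induction h1 generalizing l3 with
  | nil => cases h2; exact List.Forall₂.nil
  | cons h _ ih => cases h2 with
    | cons h' t' => exact List.Forall₂.cons (h.trans h') (ih t')

lemma tle.vle {t t' : PBT} (h : tle t t') : List.Forall₂ (· ≤ ·) (v t) (v t') := by
  induction h with
  | refl => exact forall₂_le_refl _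
  | tail _ h ih => exact forall₂_le_trans ih h.vle

lemma forall₂_le_getD {l1 l2 : List ℕ} (h : List.Forall₂ (· ≤ ·) l1 l2) (i : ℕ) :
    l1.getD i 0 ≤ l2.getD i 0 := by
  induction h generalizing i with
  | nil => simp
  | cons h _ ih => cases i with
    | zero => simpa using h
    | succ n => simpa using ih n

lemma getD_forall₂_le {l1 l2 : List ℕ} (hl : l1.length = l2.length)
    (h : ∀ i, l1.getD i 0 ≤ l2.getD i 0) : List.Forall₂ (· ≤ ·) l1 l2 := by
  rw [List.forall₂_iff_get]
  refine ⟨hl, fun i h1 h2 => ?_⟩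
  have := h i
  rwa [List.getD_eq_getElem _ _ h1, List.getD_eq_getElem _ _ h2] at this
lemma tle_refl (t : PBT) : tle t t := Relation.ReflTransGen.refl

lemma tle.trans' {a b c : PBT} (h1 : tle a b) (h2 : tle b c) : tle a c :=
  Relation.ReflTransGen.trans h1 h2

lemma tle_node_left {a a' : PBT} (b : PBT) (h : tle a a') :
    tle (.node a b) (.node a' b) := by
  induction h with
  | refl => exact tle_refl _
  | tail _ h ih => exact ih.tail (TStep.left b h)

lemma tle_node_right (a : PBT) {b b' : PBT} (h : tle b b') :
    tle (.node a b) (.node a b') := by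
  induction h with
  | refl => exact tle_refl _
  | tail _ h ih => exact ih.tail (TStep.right a h)

lemma tle_node {a a' b b' : PBT} (h1 : tle a a') (h2 : tle b b') :
    tle (.node a b) (.node a' b') :=
  (tle_node_left b h1).trans' (tle_node_right a' h2)

/-- Key splitting lemma: if `a` has more than `m` leaves and the bracket vector
of `a` is dominated by `f` which is "small" before position `m-1` and at least
`|a| - m` at `m - 1`, then `a` can be rotated up to a tree `p ∨ q` with
`|p| = m`, still dominated by `f`. -/
lemma splitLeft : ∀ (a : PBT) (m : ℕ) (f : ℕ → ℕ),
    1 ≤ m → m < leavesCount a →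
    (∀ i, i + 1 < leavesCount a → (v a).getD i 0 ≤ f i) →
    (∀ i, i + 1 < m → f i ≤ m - 1 - i) →
    (leavesCount a - m ≤ f (m - 1)) →
    ∃ p q : PBT, tle a (.node p q) ∧ leavesCount p = m ∧
      leavesCount q = leavesCount a - m ∧
      (∀ i, i + 1 < leavesCount a → (v (.node p q)).getD i 0 ≤ f i) := by
  intro a
  induction a with
  | leaf => intro m f h1 h2; simp [leavesCount] at h2; omega
  | node a₁ a₂ ih ih2 =>
    intro m f hm1 hma Hva Hf1 Hfm
    clear ih2
    have h1 := one_le_leaves a₁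
    have h2 := one_le_leaves a₂
    have hsz : leavesCount (PBT.node a₁ a₂) = leavesCount a₁ + leavesCount a₂ := rfl
    -- m ≤ |a₁|
    have hm_le : m ≤ leavesCount a₁ := by
      by_contra hc
      push_neg at hc
      -- index |a₁| - 1 < m - 1
      have hidx : leavesCount a₁ - 1 + 1 < m := by omega
      have e1 : (v (PBT.node a₁ a₂)).getD (leavesCount a₁ - 1) 0 = leavesCount a₂ :=
        v_node_eq a₁ a₂
      have e2 := Hva (leavesCount a₁ - 1) (by omega)
      have e3 := Hf1 (leavesCount a₁ - 1) hidx
      omega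
    rcases eq_or_lt_of_le hm_le with heq | hlt
    · exact ⟨a₁, a₂, tle_refl _, heq.symm, by omega, Hva⟩
    · -- recurse into a₁
      have Hva1 : ∀ i, i + 1 < leavesCount a₁ → (v a₁).getD i 0 ≤ f i := by
        intro i hi
        have := Hva i (by omega)
        rwa [v_node_lt a₂ hi] at this
      obtain ⟨p, q, hpq, hp, hq, HB⟩ := ih m f hm1 hlt Hva1 Hf1 (by omega)
      refine ⟨p, .node q a₂, ?_, hp, by simp only [leavesCount]; omega, ?_⟩
      · -- a₁ ∨ a₂ ⤳* (p ∨ q) ∨ a₂ ⤳ p ∨ (q ∨ a₂)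
        exact (tle_node_left a₂ hpq).tail (TStep.rot p q a₂)
      · intro i hi
        have hvp : (v p).length = m - 1 := by rw [v_length, hp]
        have hnew : leavesCount (PBT.node q a₂) = leavesCount (PBT.node a₁ a₂) - m := by
          simp only [leavesCount]; omega
        rcases lt_trichotomy (i + 1) m with hc | hc | hc
        · -- in v p
          have := HB i (by omega)
          rw [v_node_lt q (by omega)] at this
          rwa [v_node_lt (PBT.node q a₂) (by omega)]
        · -- separator: value |q| + |a₂| = |a| - m
          have hieq : i = leavesCount p - 1 := by omega
          rw [hieq, v_node_eq, hnew, hp]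
          exact Hfm
        · -- beyond p: indices of v (q ∨ a₂)
          have hi' : i = leavesCount p + (i - m) := by omega
          rw [hi', v_node_ge p (PBT.node q a₂) (i - m)]
          set j := i - m with hj
          rcases lt_trichotomy (j + 1) (leavesCount q) with hd | hd | hd
          · rw [v_node_lt a₂ hd]
            have hB := HB (m + j) (by omega)
            rw [show m + j = leavesCount p + j by omega, v_node_ge] at hB
            exact hB
          · have hjq : j = leavesCount q - 1 := by omega
            rw [hjq, v_node_eq]
            have hA := Hva (leavesCount a₁ - 1) (by omega)
            rw [v_node_eq] at hA
            have e2 : leavesCount p + (leavesCount q - 1) = leavesCount a₁ - 1 := by omega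
            rw [e2]
            exact hA
          · have hjq : j = leavesCount q + (j - leavesCount q) := by omega
            have e1 : (v (PBT.node q a₂)).getD j 0 = (v a₂).getD (j - leavesCount q) 0 := by
              conv_lhs => rw [hjq]
              rw [v_node_ge]
            have hA := Hva (leavesCount a₁ + (j - leavesCount q)) (by omega)
            rw [v_node_ge] at hA
            have e2 : leavesCount a₁ + (j - leavesCount q) = leavesCount p + j := by omega
            rw [e2] at hA
            rw [e1]
            exact hA
/-- Hard direction of the Huang–Tamari characterization. -/
lemma vle_tle : ∀ n t w, leavesCount t = n → leavesCount w = n →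
    (∀ i, (v t).getD i 0 ≤ (v w).getD i 0) → tle t w := by
  intro n
  induction n using Nat.strong_induction_on with
  | _ n IH =>
  intro t w ht hw hvle
  cases t with
  | leaf =>
    have : w = .leaf := leaves_eq_one (by simp [leavesCount] at ht; omega)
    subst this; exact tle_refl _
  | node a b =>
    have ha := one_le_leaves a
    have hb := one_le_leaves b
    have htn : leavesCount (PBT.node a b) = leavesCount a + leavesCount b := rfl
    cases w with
    | leaf => simp [leavesCount] at hw; omega
    | node c d =>
      have hc := one_le_leaves c
      have hd := one_le_leaves d
      have hwn : leavesCount (PBT.node c d) = leavesCount c + leavesCount d := rfl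
      set m := leavesCount c with hm
      -- m ≤ |a|
      have hm_le : m ≤ leavesCount a := by
        by_contra hcon
        push_neg at hcon
        have e1 := hvle (leavesCount a - 1)
        rw [v_node_eq] at e1
        have e2 : (v (PBT.node c d)).getD (leavesCount a - 1) 0
            = (v c).getD (leavesCount a - 1) 0 := v_node_lt d (by omega)
        have e3 := v_bound c (leavesCount a - 1)
        omega
      rcases eq_or_lt_of_le hm_le with heq | hlt
      · -- equal left sizes
        have hbd : leavesCount b = leavesCount d := by omega
        have h1 : tle a c := by
          refine IH (leavesCount a) (by omega) a c rfl (by omega) ?_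
          intro i
          rcases Nat.lt_or_ge (i + 1) (leavesCount a) with hi | hi
          · have := hvle i
            rwa [v_node_lt b hi, v_node_lt d (by omega)] at this
          · rw [List.getD_eq_default _ _ (by rw [v_length]; omega)]
            simp
        have h2 : tle b d := by
          refine IH (leavesCount b) (by omega) b d rfl (by omega) ?_
          intro i
          rcases Nat.lt_or_ge (i + 1) (leavesCount b) with hi | hi
          · have := hvle (leavesCount a + i)
            rw [v_node_ge, show leavesCount a + i = leavesCount c + i by omega,
              v_node_ge] at this
            exact this
          · rw [List.getD_eq_default _ _ (by rw [v_length]; omega)]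
            simp
        exact tle_node h1 h2
      · -- m < |a| : split a
        obtain ⟨p, q, hpq, hp, hq, HB⟩ := splitLeft a m (fun i => (v (PBT.node c d)).getD i 0)
          (by omega) hlt
          (by
            intro i hi
            have := hvle i
            rwa [v_node_lt b hi] at this)
          (by
            intro i hi
            show (v (PBT.node c d)).getD i 0 ≤ m - 1 - i
            have e2 : (v (PBT.node c d)).getD i 0 = (v c).getD i 0 := v_node_lt d (by omega)
            have e3 := v_bound c i
            omega)
          (by
            show leavesCount a - m ≤ (v (PBT.node c d)).getD (m - 1) 0
            have e2 : (v (PBT.node c d)).getD (m - 1) 0 = leavesCount d := v_node_eq c d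
            omega)
        -- t ⤳* (p ∨ q) ∨ b ⤳ p ∨ (q ∨ b) ⤳* c ∨ d
        have step1 : tle (PBT.node a b) (PBT.node (PBT.node p q) b) := tle_node_left b hpq
        have step2 : tle (PBT.node (PBT.node p q) b) (PBT.node p (PBT.node q b)) :=
          Relation.ReflTransGen.single (TStep.rot p q b)
        have h1 : tle p c := by
          refine IH m (by omega) p c hp rfl ?_
          intro i
          rcases Nat.lt_or_ge (i + 1) m with hi | hi
          · have := HB i (by omega)
            rw [v_node_lt q (by omega)] at this
            rwa [v_node_lt d (by omega)] at this
          · rw [List.getD_eq_default _ _ (by rw [v_length]; omega)]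
            simp
        have h2 : tle (PBT.node q b) d := by
          have hqb : leavesCount (PBT.node q b) = leavesCount q + leavesCount b := rfl
          refine IH (leavesCount d) (by omega) (PBT.node q b) d (by omega) rfl ?_
          intro i
          have target_eq : ∀ j, j + 1 < leavesCount d →
              (v d).getD j 0 = (v (PBT.node c d)).getD (m + j) 0 := by
            intro j hj
            rw [v_node_ge]
          rcases Nat.lt_or_ge (i + 1) (leavesCount q + leavesCount b) with hi | hi
          · rw [target_eq i (by omega)]
            rcases lt_trichotomy (i + 1) (leavesCount q) with hj | hj | hj
            · rw [v_node_lt b hj]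
              have := HB (m + i) (by omega)
              rw [show m + i = leavesCount p + i by omega, v_node_ge] at this
              rw [show leavesCount p + i = m + i by omega] at this
              exact this
            · have hieq : i = leavesCount q - 1 := by omega
              rw [hieq, v_node_eq]
              have := hvle (leavesCount a - 1)
              rw [v_node_eq] at this
              rw [show m + (leavesCount q - 1) = leavesCount a - 1 by omega]
              exact this
            · have e1 : (v (PBT.node q b)).getD i 0
                  = (v b).getD (i - leavesCount q) 0 := by
                conv_lhs => rw [show i = leavesCount q + (i - leavesCount q) by omega]
                rw [v_node_ge]
              have := hvle (leavesCount a + (i - leavesCount q))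
              rw [v_node_ge] at this
              rw [show leavesCount a + (i - leavesCount q) = m + i by omega] at this
              rw [e1]
              exact this
          · rw [List.getD_eq_default _ _ (by rw [v_length, hqb]; omega)]
            simp
        exact (step1.trans' step2).trans' (tle_node h1 h2)
def sumC (l : List PBT) : ℕ := (l.map leavesCount).sum

lemma sumC_append (l1 l2 : List PBT) : sumC (l1 ++ l2) = sumC l1 + sumC l2 := by
  simp [sumC]

lemma sumC_take_add (ws : List PBT) (a b : ℕ) :
    sumC (ws.take (a + b)) = sumC (ws.take a) + sumC ((ws.drop a).take b) := by
  rw [List.take_add, sumC_append]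

lemma sumC_take_succ (ws : List PBT) (j : ℕ) (h : j < ws.length) :
    sumC (ws.take (j+1)) = sumC (ws.take j) + leavesCount (ws.getD j .leaf) := by
  rw [List.take_succ, sumC_append, List.getD_eq_getElem _ _ h]
  simp [sumC, List.getElem?_eq_getElem h]

lemma le_sumC (l : List PBT) : l.length ≤ sumC l := by
  induction l with
  | nil => simp [sumC]
  | cons x xs ih =>
    have := one_le_leaves x
    simp only [sumC, List.map_cons, List.sum_cons, List.length_cons] at *
    omega

lemma sumC_take_mono (ws : List PBT) {a b : ℕ} (h : a ≤ b) :
    sumC (ws.take a) ≤ sumC (ws.take b) := by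
  have : ws.take b = ws.take a ++ (ws.drop a).take (b - a) := by
    rw [← List.take_add]
    congr 1
    omega
  rw [this, sumC_append]
  omega

lemma sumC_take_lt (ws : List PBT) {a b : ℕ} (h : a < b) (hb : b ≤ ws.length) :
    sumC (ws.take a) < sumC (ws.take b) := by
  have h1 : sumC (ws.take (a+1)) ≤ sumC (ws.take b) := sumC_take_mono ws (by omega)
  have h2 := sumC_take_succ ws a (by omega)
  have h3 := one_le_leaves (ws.getD a .leaf)
  omega

lemma take_le_take (xs : List PBT) {e f : ℕ} (he : e ≤ xs.length)
    (h : sumC (xs.take e) ≤ sumC (xs.take f)) : e ≤ f := by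
  by_contra hc
  push_neg at hc
  have := sumC_take_lt xs hc he
  omega

lemma getD_drop' (ws : List PBT) (m n : ℕ) :
    (ws.drop m).getD n .leaf = ws.getD (m + n) .leaf := by
  rw [List.getD_eq_getElem?_getD, List.getD_eq_getElem?_getD, List.getElem?_drop]

/-- Specification of `graftAux`: second component and leaf count. -/
lemma graft_spec : ∀ (t : PBT) (ws : List PBT), leavesCount t ≤ ws.length →
    (graftAux t ws).2 = ws.drop (leavesCount t) ∧
    leavesCount (graftAux t ws).1 = sumC (ws.take (leavesCount t)) := by
  intro t
  induction t with
  | leaf =>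
    intro ws h
    match ws with
    | w :: rest =>
      simp [graftAux, leavesCount, sumC]
  | node l r ihl ihr =>
    intro ws h
    have hsz : leavesCount (PBT.node l r) = leavesCount l + leavesCount r := rfl
    have hl : leavesCount l ≤ ws.length := by omega
    obtain ⟨hp2, hp1⟩ := ihl ws hl
    have hr : leavesCount r ≤ (ws.drop (leavesCount l)).length := by
      simp [List.length_drop]; omega
    rw [← hp2] at hr
    obtain ⟨hq2, hq1⟩ := ihr (graftAux l ws).2 hr
    simp only [graftAux]
    constructor
    · rw [hq2, hp2, List.drop_drop, hsz]
    · show leavesCount (graftAux l ws).1 + leavesCount (graftAux r (graftAux l ws).2).1 = _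
      rw [hq1, hp1, hp2, hsz, sumC_take_add]

/-- Entries of the bracket vector of a grafting, inside block `j`. -/
lemma graft_block : ∀ (t : PBT) (ws : List PBT) (j i : ℕ), leavesCount t ≤ ws.length →
    j < leavesCount t → i + 1 < leavesCount (ws.getD j .leaf) →
    (v (graftAux t ws).1).getD (sumC (ws.take j) + i) 0 = (v (ws.getD j .leaf)).getD i 0 := by
  intro t
  induction t with
  | leaf =>
    intro ws j i h hj hi
    have hj0 : j = 0 := by simp [leavesCount] at hj; omega
    subst hj0
    match ws with
    | w :: rest => simp [graftAux, sumC]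
  | node l r ihl ihr =>
    intro ws j i h hj hi
    have hsz : leavesCount (PBT.node l r) = leavesCount l + leavesCount r := rfl
    have hl : leavesCount l ≤ ws.length := by omega
    obtain ⟨hp2, hp1⟩ := graft_spec l ws hl
    have hfst : (graftAux (PBT.node l r) ws).1
        = PBT.node (graftAux l ws).1 (graftAux r (ws.drop (leavesCount l))).1 := by
      simp only [graftAux]
      rw [hp2]
    rw [hfst]
    rcases Nat.lt_or_ge j (leavesCount l) with hc | hc
    · -- block inside left part
      have hlt : sumC (ws.take j) + i + 1 < leavesCount (graftAux l ws).1 := by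
        rw [hp1]
        have h1 : sumC (ws.take (j+1)) ≤ sumC (ws.take (leavesCount l)) :=
          sumC_take_mono ws (by omega)
        have h2 := sumC_take_succ ws j (by omega)
        omega
      rw [v_node_lt _ hlt]
      exact ihl ws j i hl hc hi
    · -- block inside right part
      set j' := j - leavesCount l with hj'
      have hIdx : sumC (ws.take j) + i
          = leavesCount (graftAux l ws).1 + (sumC ((ws.drop (leavesCount l)).take j') + i) := by
        rw [hp1]
        have : sumC (ws.take j) = sumC (ws.take (leavesCount l))
            + sumC ((ws.drop (leavesCount l)).take j') := by
          rw [← sumC_take_add]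
          congr 2
          omega
        omega
      rw [hIdx, v_node_ge]
      have hrec := ihr (ws.drop (leavesCount l)) j' i
        (by simp [List.length_drop]; omega) (by omega)
        (by rw [getD_drop']; rw [show leavesCount l + j' = j by omega]; exact hi)
      rw [getD_drop', show leavesCount l + j' = j by omega] at hrec
      exact hrec

/-- Entries of the bracket vector of a grafting, at separator `j`. -/
lemma graft_sep : ∀ (t : PBT) (ws : List PBT) (j : ℕ), leavesCount t ≤ ws.length →
    j + 1 < leavesCount t →
    (v (graftAux t ws).1).getD (sumC (ws.take (j+1)) - 1) 0
      = sumC ((ws.drop (j+1)).take ((v t).getD j 0)) := by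
  intro t
  induction t with
  | leaf => intro ws j h hj; simp [leavesCount] at hj
  | node l r ihl ihr =>
    intro ws j h hj
    have hsz : leavesCount (PBT.node l r) = leavesCount l + leavesCount r := rfl
    have h1l := one_le_leaves l
    have h1r := one_le_leaves r
    have hl : leavesCount l ≤ ws.length := by omega
    obtain ⟨hp2, hp1⟩ := graft_spec l ws hl
    have hfst : (graftAux (PBT.node l r) ws).1
        = PBT.node (graftAux l ws).1 (graftAux r (ws.drop (leavesCount l))).1 := by
      simp only [graftAux]
      rw [hp2]
    obtain ⟨hq2, hq1⟩ := graft_spec r (ws.drop (leavesCount l))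
      (by simp [List.length_drop]; omega)
    rw [hfst]
    rcases lt_trichotomy (j + 1) (leavesCount l) with hc | hc | hc
    · -- inside left part
      have hlt : sumC (ws.take (j+1)) - 1 + 1 < leavesCount (graftAux l ws).1 := by
        rw [hp1]
        have h1 : sumC (ws.take (j+1)) < sumC (ws.take (leavesCount l)) :=
          sumC_take_lt ws hc hl
        have h2 : 1 ≤ sumC (ws.take (j+1)) := by
          have := sumC_take_lt ws (show 0 < j+1 by omega) (by omega)
          simpa [sumC, Nat.one_le_iff_ne_zero, Nat.pos_iff_ne_zero] using this
        omega
      rw [v_node_lt _ hlt, v_node_lt r hc]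
      exact ihl ws j hl hc
    · -- separator between left and right parts of t
      have hieq : sumC (ws.take (j+1)) - 1 = leavesCount (graftAux l ws).1 - 1 := by
        rw [hp1, hc]
      rw [hieq, v_node_eq, hq1]
      rw [show (v (PBT.node l r)).getD j 0 = leavesCount r by
        rw [show j = leavesCount l - 1 by omega]; exact v_node_eq l r]
      rw [show j + 1 = leavesCount l by omega]
    · -- inside right part
      set j' := j - leavesCount l with hj'
      have hjj : j = leavesCount l + j' := by omega
      have hlen' : j' + 1 < leavesCount r := by omega
      have hpos : 1 ≤ sumC ((ws.drop (leavesCount l)).take (j'+1)) := by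
        have := sumC_take_lt (ws.drop (leavesCount l)) (show 0 < j'+1 by omega)
          (by simp [List.length_drop]; omega)
        simpa [sumC, Nat.one_le_iff_ne_zero, Nat.pos_iff_ne_zero] using this
      have hIdx : sumC (ws.take (j+1)) - 1
          = leavesCount (graftAux l ws).1 + (sumC ((ws.drop (leavesCount l)).take (j'+1)) - 1) := by
        rw [hp1]
        have : sumC (ws.take (j+1)) = sumC (ws.take (leavesCount l))
            + sumC ((ws.drop (leavesCount l)).take (j'+1)) := by
          rw [← sumC_take_add]
          congr 2
          omega
        omega
      rw [hIdx, v_node_ge]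
      have hrec := ihr (ws.drop (leavesCount l)) j' (by simp [List.length_drop]; omega) hlen'
      rw [hrec, List.drop_drop]
      rw [show (v (PBT.node l r)).getD j 0 = (v r).getD j' 0 by
        rw [hjj]; exact v_node_ge l r j']
      rw [show leavesCount l + (j' + 1) = j + 1 by omega]
lemma forall₂_map_eq {ts ws : List PBT}
    (h : List.Forall₂ (fun a b => leavesCount a = leavesCount b) ts ws) :
    ts.map leavesCount = ws.map leavesCount := by
  induction h with
  | nil => rfl
  | cons hh _ ih => simp [hh, ih]


/-- If `t₀ ∘ (t₁,…,t_r) ≤_T w₀ ∘ (w₁,…,w_r)` with `t₀, w₀` having `r` leaves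
and `tᵢ, wᵢ` having the same number of leaves for each `i`, then `t₀ ≤_T w₀`
and `tᵢ ≤_T wᵢ` for all `i`. -/
theorem stmt7 (t0 w0 : PBT) (ts ws : List PBT)
    (hlen : ts.length = leavesCount t0) (hlen' : ws.length = leavesCount w0)
    (hr : leavesCount t0 = leavesCount w0)
    (hsz : List.Forall₂ (fun a b => leavesCount a = leavesCount b) ts ws)
    (h : tle (graftMany t0 ts) (graftMany w0 ws)) :
    tle t0 w0 ∧ List.Forall₂ tle ts ws := by
  
  have hprof := forall₂_map_eq hsz
  have hlent : leavesCount t0 ≤ ts.length := le_of_eq hlen.symm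
  have hlenw : leavesCount w0 ≤ ws.length := le_of_eq hlen'.symm
  have hsums : ∀ k, sumC (ws.take k) = sumC (ts.take k) := by
    intro k; simp only [sumC, List.map_take, hprof]
  have hsumdt : ∀ k f, sumC ((ws.drop k).take f) = sumC ((ts.drop k).take f) := by
    intro k f; simp only [sumC, List.map_take, List.map_drop, hprof]
  have hle : ∀ i, (v (graftMany t0 ts)).getD i 0 ≤ (v (graftMany w0 ws)).getD i 0 :=
    forall₂_le_getD h.vle
  simp only [graftMany] at hle
  have hT : tle t0 w0 := by
    apply vle_tle (leavesCount t0) t0 w0 rfl hr.symm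
    intro i
    rcases Nat.lt_or_ge (i + 1) (leavesCount t0) with hi | hi
    · have hbT := graft_sep t0 ts i hlent hi
      have hbW := graft_sep w0 ws i hlenw (by omega)
      rw [hsums, hsumdt] at hbW
      have hx := hle (sumC (ts.take (i+1)) - 1)
      rw [hbT, hbW] at hx
      refine take_le_take (ts.drop (i+1)) ?_ hx
      rw [List.length_drop, hlen]
      have := v_bound t0 i
      omega
    · rw [List.getD_eq_default _ _ (by rw [v_length]; omega)]
      simp
  refine ⟨hT, ?_⟩
  rw [List.forall₂_iff_get]
  have hlen2 : ts.length = ws.length := by omega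
  refine ⟨hlen2, fun j h1 h2 => ?_⟩
  have hcnt : leavesCount (ts.get ⟨j, h1⟩) = leavesCount (ws.get ⟨j, h2⟩) :=
    (List.forall₂_iff_get.mp hsz).2 j h1 h2
  have hgetT : ts.getD j .leaf = ts.get ⟨j, h1⟩ := by
    rw [List.getD_eq_getElem _ _ h1, List.get_eq_getElem]
  have hgetW : ws.getD j .leaf = ws.get ⟨j, h2⟩ := by
    rw [List.getD_eq_getElem _ _ h2, List.get_eq_getElem]
  apply vle_tle (leavesCount (ts.get ⟨j, h1⟩)) _ _ rfl hcnt.symm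
  intro i
  rcases Nat.lt_or_ge (i + 1) (leavesCount (ts.get ⟨j, h1⟩)) with hi | hi
  · have hbT := graft_block t0 ts j i hlent (by omega) (by rw [hgetT]; exact hi)
    have hbW := graft_block w0 ws j i hlenw (by omega) (by rw [hgetW]; omega)
    rw [hsums] at hbW
    have hx := hle (sumC (ts.take j) + i)
    rw [hbT, hbW, hgetT, hgetW] at hx
    exact hx
  · rw [List.getD_eq_default _ _ (by rw [v_length]; omega)]
    simp
end

section
/- For n ≥ 2, the Möbius element of the right comb satisfies M_{1ₙ} = Σ_{i=1}^{n−1} (−1)^{i−1} · (0ᵢ ∨ M_{1_{n−i}}), where 0ᵢ is the left comb with i leaves. -/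
open Classical

/-- The right comb `1ₙ`: `rightComb n` has `n+1` leaves, so `1ₙ = rightComb (n-1)`. -/
def rightComb : ℕ → PBT
  | 0 => .leaf
  | n + 1 => .node .leaf (rightComb n)

/-- The left comb `0ₙ`: `leftComb n` has `n+1` leaves, so `0ₙ = leftComb (n-1)`. -/
def leftComb : ℕ → PBT
  | 0 => .leaf
  | n + 1 => .node (leftComb n) .leaf

namespace Stmt10Aux

lemma leaves_pos (t : PBT) : 1 ≤ leavesCount t := by
  induction t with
  | leaf => simp [leavesCount]
  | node l r ihl ihr => simp only [leavesCount]; omega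

lemma leaves_node (l r : PBT) :
    leavesCount (PBT.node l r) = leavesCount l + leavesCount r := rfl

lemma leaves_rc (k : ℕ) : leavesCount (rightComb k) = k + 1 := by
  induction k with
  | zero => rfl
  | succ k ih => simp [rightComb, leaves_node, ih, leavesCount]; omega

lemma leaves_lc (k : ℕ) : leavesCount (leftComb k) = k + 1 := by
  induction k with
  | zero => rfl
  | succ k ih => simp [leftComb, leaves_node, ih, leavesCount]

lemma eq_leaf_of_leaves (t : PBT) (h : leavesCount t = 1) : t = PBT.leaf := by
  cases t with
  | leaf => rfl
  | node l r =>
    have := leaves_pos l; have := leaves_pos r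
    simp only [leaves_node] at h; omega

lemma lc_inj {a b : ℕ} (h : leftComb a = leftComb b) : a = b := by
  have := congrArg leavesCount h
  rw [leaves_lc, leaves_lc] at this; omega

lemma tle_refl (t : PBT) : tle t t := Relation.ReflTransGen.refl

lemma tle_trans {a b c : PBT} (h1 : tle a b) (h2 : tle b c) : tle a c :=
  Relation.ReflTransGen.trans h1 h2

lemma tle_of_step {a b : PBT} (h : TStep a b) : tle a b :=
  Relation.ReflTransGen.single h

lemma tle_node_left {a a' : PBT} (c : PBT) (h : tle a a') :
    tle (PBT.node a c) (PBT.node a' c) :=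
  Relation.ReflTransGen.lift (fun x => PBT.node x c) (fun _ _ hs => TStep.left c hs) _ _ h

lemma tle_node_right (a : PBT) {c c' : PBT} (h : tle c c') :
    tle (PBT.node a c) (PBT.node a c') :=
  Relation.ReflTransGen.lift (fun x => PBT.node a x) (fun _ _ hs => TStep.right a hs) _ _ h

lemma tstep_leaves {x y : PBT} (h : TStep x y) : leavesCount x = leavesCount y := by
  induction h with
  | rot a b c => simp only [leaves_node]; omega
  | left c h ih => simp only [leaves_node]; omega
  | right a h ih => simp only [leaves_node]; omega

lemma tle_leaves {x y : PBT} (h : tle x y) : leavesCount x = leavesCount y := by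
  induction h with
  | refl => rfl
  | tail _ hstep ih => rw [ih, tstep_leaves hstep]

def lw : PBT → ℕ
  | .leaf => 0
  | .node l r => lw l + lw r + leavesCount l

lemma tstep_lw {x y : PBT} (h : TStep x y) : lw y < lw x := by
  induction h with
  | rot a b c =>
    have := leaves_pos a
    simp only [lw, leaves_node]; omega
  | left c h ih =>
    have := tstep_leaves h
    simp only [lw]; omega
  | right a h ih => simp only [lw]; omega

lemma tle_lw {x y : PBT} (h : tle x y) : lw y ≤ lw x := by
  induction h with
  | refl => exact le_rfl
  | tail _ hstep ih => exact le_trans (le_of_lt (tstep_lw hstep)) ih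

lemma tle_lw_lt {x y : PBT} (h : tle x y) (hne : y ≠ x) : lw y < lw x := by
  rcases (Relation.ReflTransGen.cases_head h) with rfl | ⟨c, hc, hcy⟩
  · exact absurd rfl hne
  · exact lt_of_le_of_lt (tle_lw hcy) (tstep_lw hc)

lemma node_rc_le (a : ℕ) : ∀ b : ℕ,
    tle (PBT.node (rightComb a) (rightComb b)) (rightComb (a + b + 1)) := by
  induction a with
  | zero =>
    intro b
    have : rightComb (0 + b + 1) = PBT.node PBT.leaf (rightComb b) := by
      simp [rightComb]
    rw [this]; exact tle_refl _
  | succ a ih =>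
    intro b
    have h1 : TStep (PBT.node (rightComb (a+1)) (rightComb b))
        (PBT.node PBT.leaf (PBT.node (rightComb a) (rightComb b))) := by
      show TStep (PBT.node (PBT.node PBT.leaf (rightComb a)) (rightComb b)) _
      exact TStep.rot _ _ _
    have h2 := tle_node_right PBT.leaf (ih b)
    have h3 : PBT.node PBT.leaf (rightComb (a + b + 1)) = rightComb (a + 1 + b + 1) := by
      have : a + 1 + b + 1 = (a + b + 1) + 1 := by omega
      rw [this]; rfl
    rw [← h3]
    exact tle_trans (tle_of_step h1) h2

lemma tle_top (w : PBT) : tle w (rightComb (leavesCount w - 1)) := by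
  induction w with
  | leaf => exact tle_refl _
  | node l r ihl ihr =>
    have h1 : tle (PBT.node l r) (PBT.node (rightComb (leavesCount l - 1)) (rightComb (leavesCount r - 1))) :=
      tle_trans (tle_node_left r ihl) (tle_node_right _ ihr)
    have h2 := node_rc_le (leavesCount l - 1) (leavesCount r - 1)
    have hl := leaves_pos l; have hr := leaves_pos r
    have h3 : (leavesCount l - 1) + (leavesCount r - 1) + 1 = leavesCount (PBT.node l r) - 1 := by
      simp only [leaves_node]; omega
    rw [h3] at h2
    exact tle_trans h1 h2

lemma no_tstep_to_leaf {y : PBT} (h : TStep y PBT.leaf) : False := by cases h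

lemma no_tstep_rc (k : ℕ) : ∀ {y : PBT}, ¬ TStep (rightComb k) y := by
  induction k with
  | zero => intro y h; cases h
  | succ k ih =>
    intro y h
    show False
    cases h with
    | left c h => cases h
    | right a h => exact ih h

lemma tle_rc_eq {k : ℕ} {z : PBT} (h : tle (rightComb k) z) : z = rightComb k := by
  rcases (Relation.ReflTransGen.cases_head h) with rfl | ⟨c, hc, _⟩
  · rfl
  · exact absurd hc (no_tstep_rc k)


def can : PBT → List Bool
  | .leaf => []
  | .node l r => can l ++ (decide (r = PBT.leaf)) :: can r

lemma can_length (t : PBT) : (can t).length + 1 = leavesCount t := by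
  induction t with
  | leaf => rfl
  | node l r ihl ihr =>
    simp only [can, List.length_append, List.length_cons, leaves_node]
    omega

lemma can_nil (t : PBT) (h : can t = []) : t = PBT.leaf := by
  apply eq_leaf_of_leaves
  have := can_length t
  rw [h] at this; simpa using this.symm

def cle (c d : List Bool) : Prop :=
  c.length = d.length ∧ ∀ p, c.getD p false = true → d.getD p false = true

lemma cle_refl (c : List Bool) : cle c c := ⟨rfl, fun _ h => h⟩

lemma cle_trans {a b c : List Bool} (h1 : cle a b) (h2 : cle b c) : cle a c :=
  ⟨h1.1.trans h2.1, fun p hp => h2.2 p (h1.2 p hp)⟩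

lemma cle_cons {x y : Bool} {c d : List Bool} (hxy : x = true → y = true)
    (h : cle c d) : cle (x :: c) (y :: d) := by
  refine ⟨by simp [h.1], fun p hp => ?_⟩
  cases p with
  | zero => simpa using hxy (by simpa using hp)
  | succ p => simpa using h.2 p (by simpa using hp)

lemma cle_append_same {c d : List Bool} (e : List Bool) (h : cle c d) :
    cle (e ++ c) (e ++ d) := by
  induction e with
  | nil => simpa using h
  | cons b e ih => exact cle_cons (fun h => h) ih

lemma cle_append_left {c d : List Bool} (e : List Bool) (h : cle c d) :
    cle (c ++ e) (d ++ e) := by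
  obtain ⟨hlen, hval⟩ := h
  refine ⟨by simp [hlen], fun p hp => ?_⟩
  by_cases hpc : p < c.length
  · rw [List.getD_append _ _ _ _ hpc] at hp
    rw [List.getD_append _ _ _ _ (by omega)]
    exact hval p hp
  · rw [List.getD_append_right _ _ _ _ (by omega)] at hp
    rw [List.getD_append_right _ _ _ _ (by omega)]
    rw [← hlen]; exact hp

lemma cle_mid {x y : Bool} (e c : List Bool) (hxy : x = true → y = true) :
    cle (e ++ x :: c) (e ++ y :: c) :=
  cle_append_same e (cle_cons hxy (cle_refl c))

lemma tstep_can {x y : PBT} (h : TStep x y) : cle (can y) (can x) := by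
  induction h with
  | rot a b c =>
    have h1 : can (PBT.node (PBT.node a b) c)
        = can a ++ (decide (b = PBT.leaf)) :: (can b ++ (decide (c = PBT.leaf)) :: can c) := by
      simp [can, List.append_assoc]
    have h2 : can (PBT.node a (PBT.node b c))
        = can a ++ (false : Bool) :: (can b ++ (decide (c = PBT.leaf)) :: can c) := by
      simp [can]
    rw [h1, h2]
    exact cle_mid _ _ (by simp)
  | left c h ih =>
    simp only [can]
    exact cle_append_left _ ih
  | right a h ih =>
    simp only [can]
    apply cle_append_same
    refine cle_cons ?_ ih
    intro hx
    simp only [decide_eq_true_eq] at hx ⊢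
    subst hx
    exact can_nil _ (List.length_eq_zero_iff.mp (by simpa [can] using ih.1.symm))

lemma tle_can {x y : PBT} (h : tle x y) : cle (can y) (can x) := by
  induction h with
  | refl => exact cle_refl _
  | tail _ hstep ih => exact cle_trans (tstep_can hstep) ih

lemma can_lc (k : ℕ) : can (leftComb k) = List.replicate k true := by
  induction k with
  | zero => rfl
  | succ k ih =>
    show can (PBT.node (leftComb k) PBT.leaf) = _
    simp [can, ih, List.replicate_succ']

lemma can_node_lc (i : ℕ) (B : PBT) :
    can (PBT.node (leftComb i) B)
      = List.replicate i true ++ (decide (B = PBT.leaf)) :: can B := by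
  simp [can, can_lc]

inductive Form : PBT → Prop
  | leaf : Form .leaf
  | node (i : ℕ) (B : PBT) : Form B → Form (.node (leftComb i) B)

def f : PBT → ℤ
  | .leaf => 1
  | .node l r =>
    if l = leftComb (leavesCount l - 1) then (-1) ^ (leavesCount l - 1) * f r else 0

lemma f_node_lc (i : ℕ) (B : PBT) :
    f (PBT.node (leftComb i) B) = (-1) ^ i * f B := by
  have h : leavesCount (leftComb i) - 1 = i := by rw [leaves_lc]; omega
  simp [f, h]

lemma f_rc (k : ℕ) : f (rightComb k) = 1 := by
  induction k with
  | zero => rfl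
  | succ k ih =>
    show f (PBT.node PBT.leaf (rightComb k)) = 1
    have : PBT.leaf = leftComb 0 := rfl
    rw [this, f_node_lc, ih]; ring

lemma form_of_f_ne {t : PBT} (h : f t ≠ 0) : Form t := by
  induction t with
  | leaf => exact Form.leaf
  | node l r ihl ihr =>
    by_cases hl : l = leftComb (leavesCount l - 1)
    · rw [hl]
      refine Form.node _ _ (ihr ?_)
      intro hr
      apply h
      simp only [f, if_pos hl, hr, mul_zero]
    · exact absurd (by simp only [f, if_neg hl]) h

lemma f_form_ne {t : PBT} (h : Form t) : f t ≠ 0 := by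
  induction h with
  | leaf => simp [f]
  | node i B hB ih =>
    rw [f_node_lc]
    intro hc
    rcases mul_eq_zero.mp hc with h1 | h1
    · exact pow_ne_zero i (by norm_num) h1
    · exact ih h1

def grow : PBT → PBT
  | .leaf => .node .leaf .leaf
  | .node l B => .node (.node l .leaf) B

lemma grow_form {T : PBT} (h : Form T) : Form (grow T) := by
  cases h with
  | leaf => exact Form.node 0 PBT.leaf Form.leaf
  | node i B hB =>
    show Form (PBT.node (PBT.node (leftComb i) PBT.leaf) B)
    exact Form.node (i+1) B hB

lemma grow_can {T : PBT} (h : Form T) : can (grow T) = true :: can T := by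
  cases h with
  | leaf => rfl
  | node i B hB =>
    show can (PBT.node (PBT.node (leftComb i) PBT.leaf) B) = _
    have : PBT.node (leftComb i) PBT.leaf = leftComb (i+1) := rfl
    rw [this, can_node_lc, can_node_lc, List.replicate_succ]
    simp

def decT : List Bool → PBT
  | [] => .leaf
  | true :: c => grow (decT c)
  | false :: c => .node .leaf (decT c)

lemma decT_ne_leaf {c : List Bool} (h : c ≠ []) : decT c ≠ PBT.leaf := by
  match c with
  | [] => exact absurd rfl h
  | true :: c =>
    show grow (decT c) ≠ PBT.leaf
    cases hd : decT c <;> simp [grow]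
  | false :: c => simp [decT]

lemma form_decT (c : List Bool) : Form (decT c) := by
  induction c with
  | nil => exact Form.leaf
  | cons b c ih =>
    cases b with
    | true => exact grow_form ih
    | false => exact Form.node 0 _ ih

lemma can_decT : ∀ c : List Bool, (c ≠ [] → c.getD (c.length - 1) false = true) →
    can (decT c) = c := by
  intro c
  induction c with
  | nil => intro _; rfl
  | cons b c ih =>
    intro h
    cases b with
    | true =>
      show can (grow (decT c)) = _
      rw [grow_can (form_decT c), ih]
      intro hc
      have h1 := h (by simp)
      have h2 : (true :: c).length - 1 = (c.length - 1) + 1 := by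
        have : c.length ≠ 0 := by simpa using hc
        simp; omega
      rw [h2] at h1
      simpa using h1
    | false =>
      have hc : c ≠ [] := by
        intro hc; subst hc
        have := h (by simp)
        simp at this
      show can (PBT.node PBT.leaf (decT c)) = _
      have h3 : decT c ≠ PBT.leaf := decT_ne_leaf hc
      simp only [can, decide_eq_false h3]
      rw [ih]
      · rfl
      · intro _
        have h1 := h (by simp)
        have h2 : (false :: c).length - 1 = (c.length - 1) + 1 := by
          have : c.length ≠ 0 := by simpa using hc
          simp; omega
        rw [h2] at h1
        simpa using h1

lemma decT_can_aux {B : PBT} (hB : decT (can B) = B) :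
    ∀ i, decT (can (PBT.node (leftComb i) B)) = PBT.node (leftComb i) B := by
  intro i
  induction i with
  | zero =>
    rw [can_node_lc]
    by_cases hBl : B = PBT.leaf
    · subst hBl; rfl
    · simp only [decide_eq_false hBl, List.replicate, List.nil_append]
      show PBT.node PBT.leaf (decT (can B)) = _
      rw [hB]; rfl
  | succ i ih =>
    have h1 : can (PBT.node (leftComb (i+1)) B) = true :: can (PBT.node (leftComb i) B) := by
      rw [can_node_lc, can_node_lc, List.replicate_succ]; simp
    rw [h1]
    show grow (decT (can (PBT.node (leftComb i) B))) = _
    rw [ih]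
    rfl

lemma decT_can {T : PBT} (h : Form T) : decT (can T) = T := by
  induction h with
  | leaf => rfl
  | node i B hB ih => exact decT_can_aux ih i

lemma form_can_inj {T T' : PBT} (h : Form T) (h' : Form T') (hc : can T = can T') :
    T = T' := by
  rw [← decT_can h, ← decT_can h', hc]

def addRight : PBT → ℕ → PBT
  | l, 0 => l
  | l, k+1 => .node (addRight l k) .leaf

lemma addRight_leaf (k : ℕ) : addRight PBT.leaf k = leftComb k := by
  induction k with
  | zero => rfl
  | succ k ih => show PBT.node (addRight PBT.leaf k) PBT.leaf = _; rw [ih]; rfl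

lemma addRight_node_leaf (p : PBT) (k : ℕ) :
    addRight (PBT.node p PBT.leaf) k = addRight p (k+1) := by
  induction k with
  | zero => rfl
  | succ k ih => show PBT.node (addRight (PBT.node p PBT.leaf) k) PBT.leaf = _; rw [ih]; rfl

lemma chain (p q : PBT) : ∀ k, tle (addRight (PBT.node p q) k) (PBT.node p (addRight q k)) := by
  intro k
  induction k with
  | zero => exact tle_refl _
  | succ k ih =>
    have h1 : tle (addRight (PBT.node p q) (k+1)) (PBT.node (PBT.node p (addRight q k)) PBT.leaf) := by
      show tle (PBT.node (addRight (PBT.node p q) k) PBT.leaf) _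
      exact tle_node_left _ ih
    have h2 : TStep (PBT.node (PBT.node p (addRight q k)) PBT.leaf)
        (PBT.node p (PBT.node (addRight q k) PBT.leaf)) := TStep.rot _ _ _
    exact tle_trans h1 (tle_of_step h2)

lemma normG : ∀ l : PBT, ∀ k (R : PBT), Form R →
    ∃ T, Form T ∧
      can T = can l ++ List.replicate k true ++ (decide (R = PBT.leaf)) :: can R ∧
      tle (PBT.node (addRight l k) R) T := by
  intro l
  induction l with
  | leaf =>
    intro k R hR
    refine ⟨PBT.node (leftComb k) R, Form.node k R hR, ?_, ?_⟩
    · rw [can_node_lc]; simp [can]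
    · rw [addRight_leaf]; exact tle_refl _
  | node p q ihp ihq =>
    intro k R hR
    by_cases hq : q = PBT.leaf
    · subst hq
      obtain ⟨T, h1, h2, h3⟩ := ihp (k+1) R hR
      refine ⟨T, h1, ?_, ?_⟩
      · rw [h2]
        simp [can, List.replicate_succ, List.replicate_succ', List.append_assoc]
      · rw [← addRight_node_leaf] at h3; exact h3
    · obtain ⟨T₁, hF1, hc1, hle1⟩ := ihq k R hR
      obtain ⟨T, hF, hc, hle⟩ := ihp 0 T₁ hF1
      have hT₁ : T₁ ≠ PBT.leaf := by
        intro h; subst h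
        have : (can PBT.leaf).length = _ := congrArg List.length hc1
        simp [can] at this
      refine ⟨T, hF, ?_, ?_⟩
      · rw [hc, hc1]
        simp only [addRight] at *
        simp [can, decide_eq_false hq, decide_eq_false hT₁, List.append_assoc]
      · have s1 : tle (PBT.node (addRight (PBT.node p q) k) R)
            (PBT.node (PBT.node p (addRight q k)) R) := tle_node_left R (chain p q k)
        have s2 : TStep (PBT.node (PBT.node p (addRight q k)) R)
            (PBT.node p (PBT.node (addRight q k) R)) := TStep.rot _ _ _
        have s3 : tle (PBT.node p (PBT.node (addRight q k) R)) (PBT.node p T₁) :=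
          tle_node_right p hle1
        have s4 : tle (PBT.node p T₁) T := hle
        exact tle_trans (tle_trans s1 (tle_of_step s2)) (tle_trans s3 s4)

lemma norm (w : PBT) : ∃ T, Form T ∧ can T = can w ∧ tle w T := by
  induction w with
  | leaf => exact ⟨PBT.leaf, Form.leaf, rfl, tle_refl _⟩
  | node l r ihl ihr =>
    obtain ⟨R, hFR, hcR, hleR⟩ := ihr
    obtain ⟨T, hF, hc, hle⟩ := normG l 0 R hFR
    have hRr : (R = PBT.leaf) = (r = PBT.leaf) := by
      by_cases h : r = PBT.leaf
      · subst h
        have : can R = [] := by rw [hcR]; rfl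
        simp [can_nil R this]
      · simp only [eq_iff_iff]
        constructor
        · intro hR; exfalso
          rw [hR] at hcR
          exact h (can_nil r (by simpa [can] using hcR.symm))
        · intro hr; exact absurd hr h
    refine ⟨T, hF, ?_, ?_⟩
    · rw [hc, hcR]
      simp [can, hRr]
    · exact tle_trans (tle_node_right l hleR) hle

lemma getD_rep_append (c : List Bool) : ∀ k p,
    (List.replicate k true ++ c).getD p false
      = if p < k then true else c.getD (p - k) false := by
  intro k
  induction k with
  | zero => intro p; simp
  | succ k ih =>
    intro p
    cases p with
    | zero => simp [List.replicate_succ]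
    | succ p =>
      rw [List.replicate_succ]
      simp only [List.cons_append, List.getD_cons_succ]
      rw [ih p]
      by_cases h : p < k
      · simp [h, Nat.succ_lt_succ h]
      · have h2 : ¬ (p + 1 < k + 1) := by omega
        simp [h, h2, Nat.succ_sub_succ]

lemma lc_split (a : ℕ) : ∀ b, tle (leftComb (a + b + 1)) (PBT.node (leftComb a) (leftComb b)) := by
  intro b
  induction b with
  | zero => exact tle_refl _
  | succ b ih =>
    have h1 : tle (leftComb (a + (b+1) + 1))
        (PBT.node (PBT.node (leftComb a) (leftComb b)) PBT.leaf) := by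
      have he : a + (b+1) + 1 = (a + b + 1) + 1 := by omega
      rw [he]
      exact tle_node_left _ ih
    have h2 : TStep (PBT.node (PBT.node (leftComb a) (leftComb b)) PBT.leaf)
        (PBT.node (leftComb a) (PBT.node (leftComb b) PBT.leaf)) := TStep.rot _ _ _
    exact tle_trans h1 (tle_of_step h2)

lemma flipLem {i i' : ℕ} (h : i' < i) (B : PBT) :
    tle (PBT.node (leftComb i) B)
      (PBT.node (leftComb i') (PBT.node (leftComb (i - i' - 1)) B)) := by
  have he : i' + (i - i' - 1) + 1 = i := by omega
  have h0 := lc_split i' (i - i' - 1)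
  rw [he] at h0
  exact tle_trans (tle_node_left B h0) (tle_of_step (TStep.rot _ _ _))

lemma formMono : ∀ N, ∀ T T' : PBT, leavesCount T ≤ N → Form T → Form T' →
    cle (can T') (can T) → tle T T' := by
  intro N
  induction N with
  | zero => intro T T' hN; have := leaves_pos T; omega
  | succ N ih =>
    intro T T' hN hT hT' hcle
    cases hT with
    | leaf =>
      have h0 : can T' = [] := List.length_eq_zero_iff.mp (by simpa [can] using hcle.1)
      rw [can_nil _ h0]
      exact tle_refl _
    | node i B hB =>
      cases hT' with
      | leaf =>
        exfalso
        have := hcle.1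
        rw [can_node_lc] at this
        simp [can] at this
      | node i' B' hB' =>
        obtain ⟨hlen, hval⟩ := hcle
        rw [can_node_lc, can_node_lc] at hlen hval
        simp only [List.length_append, List.length_replicate, List.length_cons] at hlen
        have hLB := leaves_pos B
        have hLB' := leaves_pos B'
        have hcanB := can_length B
        have hcanB' := can_length B'
        have hsizeT : leavesCount (PBT.node (leftComb i) B) = i + 1 + leavesCount B := by
          rw [leaves_node, leaves_lc]
        by_cases hB'l : B' = PBT.leaf
        · subst hB'l
          have hli : i ≤ i' := by simp [can] at hlen; omega
          have h1 : (List.replicate i' true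
              ++ (decide ((PBT.leaf : PBT) = PBT.leaf)) :: can PBT.leaf).getD i false = true := by
            rw [getD_rep_append]
            by_cases h : i < i'
            · simp [h]
            · have h2 : i = i' := by omega
              subst h2
              simp [can]
          have h2 := hval i h1
          rw [getD_rep_append] at h2
          simp only [lt_irrefl, if_false, Nat.sub_self, List.getD_cons_zero] at h2
          have hBl : B = PBT.leaf := by simpa using h2
          subst hBl
          have h3 : i = i' := by simp [can] at hlen; omega
          rw [h3]
          exact tle_refl _
        · have hdb' : (decide (B' = PBT.leaf)) = false := decide_eq_false hB'l
          rw [hdb'] at hval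
          have hii' : i' ≤ i := by
            by_contra hcon
            push_neg at hcon
            have h1 : (List.replicate i' true ++ (false : Bool) :: can B').getD i false = true := by
              rw [getD_rep_append]; simp [hcon]
            have h2 := hval i h1
            rw [getD_rep_append] at h2
            simp only [lt_irrefl, if_false, Nat.sub_self, List.getD_cons_zero] at h2
            have hBl : B = PBT.leaf := by simpa using h2
            subst hBl
            simp [can] at hlen
            omega
          have keyGen : ∀ p, (can B').getD p false = true →
              (List.replicate i true ++ (decide (B = PBT.leaf)) :: can B).getD (p + i' + 1) false
                = true := by
            intro p hp
            apply hval
            rw [getD_rep_append]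
            have h4 : ¬ (p + i' + 1 < i') := by omega
            have h5 : p + i' + 1 - i' = p + 1 := by omega
            simp only [h4, if_false, h5, List.getD_cons_succ]
            exact hp
          by_cases hieq : i' = i
          · subst hieq
            have hBl : B ≠ PBT.leaf := by
              intro h; subst h
              have hlen0 : (can B').length = 0 := by
                have h9 := hlen
                simp only [can, List.length_nil] at h9
                omega
              exact hB'l (can_nil _ (List.length_eq_zero_iff.mp hlen0))
            have hdb : (decide (B = PBT.leaf)) = false := decide_eq_false hBl
            rw [hdb] at keyGen
            have hcB : cle (can B') (can B) := by
              refine ⟨by omega, fun p hp => ?_⟩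
              have h6 := keyGen p hp
              rw [getD_rep_append] at h6
              have h7 : ¬ (p + i' + 1 < i') := by omega
              have h8 : p + i' + 1 - i' = p + 1 := by omega
              simpa only [h7, if_false, h8, List.getD_cons_succ] using h6
            have hles : leavesCount B ≤ N := by omega
            exact tle_node_right _ (ih B B' hles hB hB' hcB)
          · have hlt : i' < i := by omega
            set B₁ := PBT.node (leftComb (i - i' - 1)) B with hB₁def
            have hFB₁ : Form B₁ := Form.node _ _ hB
            have h1 : tle (PBT.node (leftComb i) B) (PBT.node (leftComb i') B₁) := flipLem hlt B
            have hcanB₁ : can B₁ = List.replicate (i - i' - 1) true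
                ++ (decide (B = PBT.leaf)) :: can B := can_node_lc _ _
            have hcB : cle (can B') (can B₁) := by
              refine ⟨?_, fun p hp => ?_⟩
              · rw [hcanB₁]
                simp only [List.length_append, List.length_replicate, List.length_cons]
                omega
              · have h6 := keyGen p hp
                rw [getD_rep_append] at h6
                rw [hcanB₁, getD_rep_append]
                by_cases h9 : p < i - i' - 1
                · simp [h9]
                · have h10 : ¬ (p + i' + 1 < i) := by omega
                  rw [if_neg h10] at h6
                  have h11 : p + i' + 1 - i = p - (i - i' - 1) := by omega
                  rw [if_neg h9, ← h11]
                  exact h6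
            have hles : leavesCount B₁ ≤ N := by
              have : leavesCount B₁ = (i - i' - 1) + 1 + leavesCount B := by
                rw [hB₁def, leaves_node, leaves_lc]
              omega
            have h2 : tle B₁ B' := ih B₁ B' hles hFB₁ hB' hcB
            exact tle_trans h1 (tle_node_right _ h2)

lemma can_last : ∀ t : PBT, t ≠ PBT.leaf →
    (can t).getD ((can t).length - 1) false = true := by
  intro t
  induction t with
  | leaf => intro h; exact absurd rfl h
  | node l r ihl ihr =>
    intro _
    by_cases hr : r = PBT.leaf
    · subst hr
      show (can l ++ [true]).getD ((can l ++ [true]).length - 1) false = true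
      rw [List.getD_append_right _ _ _ _ (by simp)]
      simp
    · have hcr : (can r).length ≠ 0 := by
        intro h0
        exact hr (can_nil _ (List.length_eq_zero_iff.mp h0))
      have hc : can (PBT.node l r) = can l ++ (decide (r = PBT.leaf)) :: can r := rfl
      rw [hc]
      have hlen : (can l ++ (decide (r = PBT.leaf)) :: can r).length - 1
          = (can l).length + ((can r).length - 1) + 1 := by
        simp; omega
      rw [hlen, List.getD_append_right _ _ _ _ (by omega)]
      have h2 : (can l).length + ((can r).length - 1) + 1 - (can l).length
          = ((can r).length - 1) + 1 := by omega
      rw [h2, List.getD_cons_succ]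
      exact ihr hr

lemma can_all_false : ∀ w : PBT,
    (∀ p, p < (can w).length - 1 → (can w).getD p false = false) →
    w = rightComb (leavesCount w - 1) := by
  intro w
  induction w with
  | leaf => intro _; rfl
  | node l r ihl ihr =>
    intro h
    have hleafl : l = PBT.leaf := by
      by_contra hl
      have hq := can_last l hl
      have hcl : (can l).length ≠ 0 := by
        intro h0; exact hl (can_nil _ (List.length_eq_zero_iff.mp h0))
      have h1 : (can (PBT.node l r)).getD ((can l).length - 1) false = true := by
        show (can l ++ (decide (r = PBT.leaf)) :: can r).getD _ false = true
        rw [List.getD_append _ _ _ _ (by omega)]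
        exact hq
      have h2 : (can l).length - 1 < (can (PBT.node l r)).length - 1 := by
        show _ < (can l ++ (decide (r = PBT.leaf)) :: can r).length - 1
        simp; omega
      rw [h _ h2] at h1
      simp at h1
    subst hleafl
    by_cases hr : r = PBT.leaf
    · subst hr; rfl
    · have hcr : (can r).length ≠ 0 := by
        intro h0; exact hr (can_nil _ (List.length_eq_zero_iff.mp h0))
      have hIH : r = rightComb (leavesCount r - 1) := by
        apply ihr
        intro p hp
        have h1 : p + 1 < (can (PBT.node PBT.leaf r)).length - 1 := by
          show _ < (can PBT.leaf ++ (decide (r = PBT.leaf)) :: can r).length - 1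
          simp [can]; omega
        have h2 := h (p+1) h1
        show (can r).getD p false = false
        have h3 : (can (PBT.node PBT.leaf r)).getD (p+1) false = (can r).getD p false := by
          show (can PBT.leaf ++ (decide (r = PBT.leaf)) :: can r).getD (p+1) false = _
          simp [can]
        rw [h3] at h2
        exact h2
      have hLr := leaves_pos r
      have h4 : leavesCount (PBT.node PBT.leaf r) - 1 = (leavesCount r - 1) + 1 := by
        simp [leaves_node, leavesCount]; omega
      rw [h4]
      show PBT.node PBT.leaf r = PBT.node PBT.leaf (rightComb (leavesCount r - 1))
      rw [← hIH]

def tcount : List Bool → ℕ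
  | [] => 0
  | b :: c => (if b then 1 else 0) + tcount c

lemma tcount_append (c d : List Bool) : tcount (c ++ d) = tcount c + tcount d := by
  induction c with
  | nil => simp [tcount]
  | cons b c ih => simp [tcount, ih]; omega

lemma tcount_replicate (k : ℕ) : tcount (List.replicate k true) = k := by
  induction k with
  | zero => rfl
  | succ k ih => rw [List.replicate_succ]; simp [tcount, ih]; omega

lemma tcount_pos : ∀ (c : List Bool) (p : ℕ), c.getD p false = true → 1 ≤ tcount c := by
  intro c
  induction c with
  | nil => intro p hp; simp at hp
  | cons b c ih =>
    intro p hp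
    cases p with
    | zero => simp at hp; simp [tcount, hp]
    | succ p =>
      rw [List.getD_cons_succ] at hp
      have := ih p hp
      simp [tcount]; omega

lemma f_count : ∀ t : PBT, Form t → t ≠ PBT.leaf →
    f t = (-1) ^ (tcount (can t) - 1) := by
  intro t hF
  induction hF with
  | leaf => intro h; exact absurd rfl h
  | node i B hB ih =>
    intro _
    rw [f_node_lc, can_node_lc]
    rw [tcount_append, tcount_replicate]
    by_cases hBl : B = PBT.leaf
    · subst hBl
      simp [tcount, f, can]
    · have h1 := ih hBl
      have h2 : tcount ((decide (B = PBT.leaf)) :: can B) = tcount (can B) := by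
        simp [tcount, decide_eq_false hBl]
      rw [h2, h1]
      have h3 : 1 ≤ tcount (can B) := by
        have h4 := can_last B hBl
        exact tcount_pos _ _ h4
      rw [← pow_add]
      congr 1
      omega

lemma card_filter_getD : ∀ c : List Bool,
    ((Finset.range c.length).filter (fun p => c.getD p false = true)).card = tcount c := by
  intro c
  induction c using List.reverseRecOn with
  | nil => simp [tcount]
  | append_singleton c b ih =>
    rw [tcount_append]
    have hlen : (c ++ [b]).length = c.length + 1 := by simp
    rw [hlen, Finset.range_add_one, Finset.filter_insert]
    have hcong : (Finset.range c.length).filter (fun p => (c ++ [b]).getD p false = true)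
        = (Finset.range c.length).filter (fun p => c.getD p false = true) := by
      apply Finset.filter_congr
      intro p hp
      rw [Finset.mem_range] at hp
      rw [List.getD_append _ _ _ _ hp]
    have hlast : (c ++ [b]).getD c.length false = b := by
      rw [List.getD_append_right _ _ _ _ le_rfl]
      simp
    by_cases hb : b = true
    · rw [if_pos (by rw [hlast, hb]), hcong]
      rw [Finset.card_insert_of_notMem (by simp)]
      rw [ih]
      simp [tcount, hb]
    · have hb' : b = false := by cases b; rfl; exact absurd rfl hb
      rw [if_neg (by rw [hlast, hb']; simp), hcong, ih]
      simp [tcount, hb']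

def allTrees : ℕ → Finset PBT
  | 0 => ∅
  | n + 1 => insert PBT.leaf (((allTrees n) ×ˢ (allTrees n)).image fun p => PBT.node p.1 p.2)

lemma mem_allTrees : ∀ n (t : PBT), leavesCount t ≤ n → t ∈ allTrees n := by
  intro n
  induction n with
  | zero => intro t h; have := leaves_pos t; omega
  | succ n ih =>
    intro t h
    cases t with
    | leaf => simp [allTrees]
    | node l r =>
      have hl := leaves_pos l; have hr := leaves_pos r
      rw [leaves_node] at h
      have h1 : l ∈ allTrees n := ih l (by omega)
      have h2 : r ∈ allTrees n := ih r (by omega)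
      simp only [allTrees, Finset.mem_insert, Finset.mem_image]
      right
      exact ⟨(l, r), Finset.mem_product.mpr ⟨h1, h2⟩, rfl⟩

lemma claimB (w : PBT) (hw : w ≠ rightComb (leavesCount w - 1)) :
    (∑ z ∈ allTrees (leavesCount w), (if tle w z then f z else 0)) = 0 := by
  classical
  have hn1 : 1 ≤ leavesCount w := leaves_pos w
  have hn2 : 2 ≤ leavesCount w := by
    by_contra hc
    exact hw (by rw [eq_leaf_of_leaves w (by omega)]; rfl)
  have hm : (can w).length = leavesCount w - 1 := by have := can_length w; omega
  have hwleaf : w ≠ PBT.leaf := by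
    intro h; rw [h] at hn2; simp [leavesCount] at hn2
  set P : Finset ℕ := (Finset.range (leavesCount w - 2)).filter
      (fun p => (can w).getD p false = true) with hPdef
  have hPmem : ∀ p ∈ P, p < leavesCount w - 2 ∧ (can w).getD p false = true := by
    intro p hp
    rw [hPdef, Finset.mem_filter, Finset.mem_range] at hp
    exact hp
  have hPne : P.Nonempty := by
    by_contra hP
    apply hw
    apply can_all_false
    intro p hp
    by_contra hval
    have hvt : (can w).getD p false = true := by
      cases hq : (can w).getD p false
      · exact absurd hq hval
      · rfl
    rw [Finset.not_nonempty_iff_eq_empty] at hP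
    have : p ∈ P := by
      rw [hPdef, Finset.mem_filter, Finset.mem_range]
      exact ⟨by omega, hvt⟩
    rw [hP] at this
    simp at this
  -- facts about members
  have memZ : ∀ z ∈ ((allTrees (leavesCount w)).filter (fun z => tle w z)).filter
      (fun z => f z ≠ 0), tle w z ∧ f z ≠ 0 := by
    intro z hz
    rw [Finset.mem_filter] at hz
    refine ⟨?_, hz.2⟩
    have := hz.1
    rw [Finset.mem_filter] at this
    exact this.2
  have zfacts : ∀ z : PBT, tle w z → f z ≠ 0 →
      Form z ∧ z ≠ PBT.leaf ∧ (can z).length = leavesCount w - 1 ∧ cle (can z) (can w) := by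
    intro z h1 h2
    have hlz : leavesCount z = leavesCount w := (tle_leaves h1).symm
    have hFz : Form z := form_of_f_ne h2
    have hzleaf : z ≠ PBT.leaf := by
      intro h; rw [h] at hlz; simp [leavesCount] at hlz; omega
    have hczlen : (can z).length = leavesCount w - 1 := by
      have := can_length z; omega
    exact ⟨hFz, hzleaf, hczlen, tle_can h1⟩
  have hcanw_last : (can w).getD (leavesCount w - 2) false = true := by
    have := can_last w hwleaf
    rw [hm] at this
    have he : leavesCount w - 1 - 1 = leavesCount w - 2 := by omega
    rw [he] at this
    exact this
  -- the sum rewriting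
  have e1 : (∑ z ∈ allTrees (leavesCount w), (if tle w z then f z else 0))
      = ∑ z ∈ (allTrees (leavesCount w)).filter (fun z => tle w z), f z :=
    (Finset.sum_filter _ _).symm
  have e2 : ∑ z ∈ (allTrees (leavesCount w)).filter (fun z => tle w z), f z
      = ∑ z ∈ ((allTrees (leavesCount w)).filter (fun z => tle w z)).filter
          (fun z => f z ≠ 0), f z :=
    (Finset.sum_filter_of_ne (fun x _ hx => hx)).symm
  have e3 : ∑ z ∈ ((allTrees (leavesCount w)).filter (fun z => tle w z)).filter
          (fun z => f z ≠ 0), f z = ∑ S ∈ P.powerset, (-1 : ℤ) ^ S.card := by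
    apply Finset.sum_bij'
      (i := fun z _ => ((Finset.range (leavesCount w - 1)).filter
          (fun p => (can z).getD p false = true)).erase (leavesCount w - 2))
      (j := fun S _ => decT ((List.range (leavesCount w - 1)).map
          (fun p => decide (p ∈ S ∨ p = leavesCount w - 2))))
    -- hi : forward maps into powerset
    · intro z hz
      obtain ⟨h1, h2⟩ := memZ z hz
      obtain ⟨hFz, hzleaf, hczlen, hclez⟩ := zfacts z h1 h2
      rw [Finset.mem_powerset]
      intro p hp
      rw [Finset.mem_erase, Finset.mem_filter, Finset.mem_range] at hp
      obtain ⟨hp1, hp2, hp3⟩ := hp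
      rw [hPdef, Finset.mem_filter, Finset.mem_range]
      refine ⟨by omega, ?_⟩
      apply hclez.2
      exact hp3
    -- hj : backward maps into s
    · intro S hS
      rw [Finset.mem_powerset] at hS
      have hSlt : ∀ p ∈ S, p < leavesCount w - 2 ∧ (can w).getD p false = true :=
        fun p hp => hPmem p (hS hp)
      set L := (List.range (leavesCount w - 1)).map
          (fun p => decide (p ∈ S ∨ p = leavesCount w - 2)) with hLdef
      have hLlen : L.length = leavesCount w - 1 := by simp [hLdef]
      have hLgetD : ∀ p, p < leavesCount w - 1 →
          L.getD p false = decide (p ∈ S ∨ p = leavesCount w - 2) := by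
        intro p hp
        rw [List.getD_eq_getElem _ _ (by rw [hLlen]; exact hp)]
        simp [hLdef]
      have hcanL : can (decT L) = L := by
        apply can_decT
        intro hne
        rw [hLlen]
        have he2 : leavesCount w - 1 - 1 = leavesCount w - 2 := by omega
        rw [he2, hLgetD _ (by omega)]
        simp
      have hFL : Form (decT L) := form_decT L
      have hleavesL : leavesCount (decT L) = leavesCount w := by
        have := can_length (decT L)
        rw [hcanL, hLlen] at this
        omega
      rw [Finset.mem_filter, Finset.mem_filter]
      have htlewL : tle w (decT L) := by
        obtain ⟨T, hFT, hcT, hleT⟩ := norm w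
        have hcleLT : cle (can (decT L)) (can T) := by
          rw [hcanL, hcT]
          refine ⟨by rw [hLlen, hm], ?_⟩
          intro p hp
          by_cases hplt : p < leavesCount w - 1
          · rw [hLgetD p hplt] at hp
            rw [decide_eq_true_eq] at hp
            rcases hp with hp | hp
            · exact (hSlt p hp).2
            · rw [hp]; exact hcanw_last
          · rw [List.getD_eq_default _ _ (by omega)] at hp
            exact absurd hp (by simp)
        have hTlv : leavesCount T = leavesCount w := by
          have h1 := can_length T
          have h2 := can_length w
          rw [hcT] at h1
          omega
        exact tle_trans hleT (formMono (leavesCount T) T (decT L) le_rfl hFT hFL hcleLT)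
      exact ⟨⟨mem_allTrees _ _ (by omega), htlewL⟩, f_form_ne hFL⟩
    -- left_inv : j (i z) = z
    · intro z hz
      obtain ⟨h1, h2⟩ := memZ z hz
      obtain ⟨hFz, hzleaf, hczlen, hclez⟩ := zfacts z h1 h2
      have hlast : (can z).getD (leavesCount w - 2) false = true := by
        have := can_last z hzleaf
        rw [hczlen] at this
        have he : leavesCount w - 1 - 1 = leavesCount w - 2 := by omega
        rw [he] at this
        exact this
      have hLcan : (List.range (leavesCount w - 1)).map
          (fun p => decide (p ∈ ((Finset.range (leavesCount w - 1)).filter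
            (fun p => (can z).getD p false = true)).erase (leavesCount w - 2)
            ∨ p = leavesCount w - 2)) = can z := by
        apply List.ext_getElem (by simp [hczlen])
        intro p hp1 hp2
        rw [List.getElem_map, List.getElem_range]
        rw [← List.getD_eq_getElem (can z) false hp2]
        have hplt : p < leavesCount w - 1 := by
          simpa using hp1
        cases hq : (can z).getD p false
        · simp only [decide_eq_false_iff_not]
          intro hcon
          rcases hcon with hcon | hcon
          · rw [Finset.mem_erase, Finset.mem_filter] at hcon
            rw [hcon.2.2] at hq
            simp at hq
          · rw [hcon] at hq
            rw [hlast] at hq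
            simp at hq
        · simp only [decide_eq_true_eq]
          by_cases hpe : p = leavesCount w - 2
          · right; exact hpe
          · left
            rw [Finset.mem_erase, Finset.mem_filter, Finset.mem_range]
            exact ⟨hpe, hplt, hq⟩
      rw [hLcan]
      exact decT_can hFz
    -- right_inv : i (j S) = S
    · intro S hS
      rw [Finset.mem_powerset] at hS
      have hSlt : ∀ p ∈ S, p < leavesCount w - 2 ∧ (can w).getD p false = true :=
        fun p hp => hPmem p (hS hp)
      set L := (List.range (leavesCount w - 1)).map
          (fun p => decide (p ∈ S ∨ p = leavesCount w - 2)) with hLdef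
      have hLlen : L.length = leavesCount w - 1 := by simp [hLdef]
      have hLgetD : ∀ p, p < leavesCount w - 1 →
          L.getD p false = decide (p ∈ S ∨ p = leavesCount w - 2) := by
        intro p hp
        rw [List.getD_eq_getElem _ _ (by rw [hLlen]; exact hp)]
        simp [hLdef]
      have hcanL : can (decT L) = L := by
        apply can_decT
        intro hne
        rw [hLlen]
        have he2 : leavesCount w - 1 - 1 = leavesCount w - 2 := by omega
        rw [he2, hLgetD _ (by omega)]
        simp
      ext p
      rw [Finset.mem_erase, Finset.mem_filter, Finset.mem_range]
      constructor
      · rintro ⟨hp1, hp2, hp3⟩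
        rw [hcanL] at hp3
        rw [hLgetD p hp2] at hp3
        rw [decide_eq_true_eq] at hp3
        rcases hp3 with hp3 | hp3
        · exact hp3
        · exact absurd hp3 hp1
      · intro hp
        have hplt := (hSlt p hp).1
        refine ⟨by omega, by omega, ?_⟩
        rw [hcanL, hLgetD p (by omega)]
        simp [hp]
    -- h : value compatibility
    · intro z hz
      obtain ⟨h1, h2⟩ := memZ z hz
      obtain ⟨hFz, hzleaf, hczlen, hclez⟩ := zfacts z h1 h2
      have hlast : (can z).getD (leavesCount w - 2) false = true := by
        have := can_last z hzleaf
        rw [hczlen] at this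
        have he : leavesCount w - 1 - 1 = leavesCount w - 2 := by omega
        rw [he] at this
        exact this
      have hmemlast : (leavesCount w - 2) ∈ (Finset.range (leavesCount w - 1)).filter
          (fun p => (can z).getD p false = true) := by
        rw [Finset.mem_filter, Finset.mem_range]
        exact ⟨by omega, hlast⟩
      have hcard : (((Finset.range (leavesCount w - 1)).filter
          (fun p => (can z).getD p false = true)).erase (leavesCount w - 2)).card
          = tcount (can z) - 1 := by
        rw [Finset.card_erase_of_mem hmemlast]
        congr 1
        have := card_filter_getD (can z)
        rw [hczlen] at this
        exact this
      rw [hcard]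
      exact f_count z hFz hzleaf
  rw [e1, e2, e3]
  rw [Finset.sum_powerset_neg_one_pow_card]
  rw [if_neg (Finset.nonempty_iff_ne_empty.mp hPne)]

lemma claimA (μ : PBT → PBT → ℤ)
    (hμrefl : ∀ t : PBT, μ t t = 1)
    (hμsum : ∀ w t : PBT, tle w t → w ≠ t →
      (∑ᶠ z : PBT, if tle w z ∧ tle z t then μ z t else 0) = 0) :
    ∀ N (w : PBT), lw w ≤ N → μ w (rightComb (leavesCount w - 1)) = f w := by
  intro N
  induction N with
  | zero =>
    intro w hlw
    cases w with
    | leaf =>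
      show μ PBT.leaf (rightComb (leavesCount PBT.leaf - 1)) = f PBT.leaf
      have h1 : rightComb (leavesCount PBT.leaf - 1) = PBT.leaf := rfl
      rw [h1, hμrefl]
      rfl
    | node l r =>
      exfalso
      have := leaves_pos l
      simp [lw] at hlw
      omega
  | succ N ih =>
    intro w hlw
    by_cases hw : w = rightComb (leavesCount w - 1)
    · rw [hw, leaves_rc]
      have h1 : leavesCount w - 1 + 1 - 1 = leavesCount w - 1 := by omega
      rw [h1, hμrefl, f_rc]
    · have htop := tle_top w
      have hsum := hμsum w (rightComb (leavesCount w - 1)) htop hw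
      have hsupp : (Function.support fun z =>
          if tle w z ∧ tle z (rightComb (leavesCount w - 1))
          then μ z (rightComb (leavesCount w - 1)) else 0)
          ⊆ ↑(allTrees (leavesCount w)) := by
        intro z hz
        simp only [Function.mem_support] at hz
        by_cases hc : tle w z ∧ tle z (rightComb (leavesCount w - 1))
        · have hlz := tle_leaves hc.1
          exact Finset.mem_coe.mpr (mem_allTrees _ _ (by omega))
        · rw [if_neg hc] at hz
          exact absurd rfl hz
      rw [finsum_eq_sum_of_support_subset _ hsupp] at hsum
      have hcong : ∀ z ∈ allTrees (leavesCount w),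
          (if tle w z ∧ tle z (rightComb (leavesCount w - 1))
            then μ z (rightComb (leavesCount w - 1)) else 0)
          = (if tle w z then μ z (rightComb (leavesCount w - 1)) else 0) := by
        intro z _
        by_cases h1 : tle w z
        · have hlz : leavesCount z = leavesCount w := (tle_leaves h1).symm
          have h2 : tle z (rightComb (leavesCount w - 1)) := by
            have h3 := tle_top z
            rw [hlz] at h3
            exact h3
          rw [if_pos ⟨h1, h2⟩, if_pos h1]
        · rw [if_neg (fun hc => h1 hc.1), if_neg h1]
      rw [Finset.sum_congr rfl hcong] at hsum
      have hwmem : w ∈ allTrees (leavesCount w) := mem_allTrees _ _ le_rfl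
      rw [← Finset.add_sum_erase (allTrees (leavesCount w)) _ hwmem] at hsum
      rw [if_pos (tle_refl w)] at hsum
      have herase : ∀ z ∈ (allTrees (leavesCount w)).erase w,
          (if tle w z then μ z (rightComb (leavesCount w - 1)) else 0)
          = (if tle w z then f z else 0) := by
        intro z hz
        have hzne : z ≠ w := (Finset.mem_erase.mp hz).1
        by_cases h1 : tle w z
        · have hlz : leavesCount z = leavesCount w := (tle_leaves h1).symm
          have hlwz : lw z ≤ N := by
            have := tle_lw_lt h1 hzne
            omega
          have h2 := ih z hlwz
          rw [hlz] at h2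
          rw [if_pos h1, if_pos h1, h2]
        · rw [if_neg h1, if_neg h1]
      rw [Finset.sum_congr rfl herase] at hsum
      have hB := claimB w hw
      rw [← Finset.add_sum_erase (allTrees (leavesCount w)) _ hwmem] at hB
      rw [if_pos (tle_refl w)] at hB
      omega

lemma node_left_inj (c : PBT) : Function.Injective (fun v => PBT.node c v) := by
  intro a b h
  simpa using h

end Stmt10Aux

/-- For `n ≥ 2`, the Möbius element of the right comb satisfies
`M_{1ₙ} = Σ_{i=1}^{n−1} (−1)^{i−1} · (0ᵢ ∨ M_{1_{n−i}})`,
where `0ᵢ` is the left comb with `i` leaves. -/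
theorem stmt10
    (μ : PBT → PBT → ℤ) (M : PBT → (PBT →₀ ℤ))
    (hM : ∀ t w : PBT, M t w = μ w t)
    (hμrefl : ∀ t : PBT, μ t t = 1)
    (hμzero : ∀ w t : PBT, ¬ tle w t → μ w t = 0)
    (hμsum : ∀ w t : PBT, tle w t → w ≠ t →
      (∑ᶠ z : PBT, if tle w z ∧ tle z t then μ z t else 0) = 0)
    (n : ℕ) (hn : 2 ≤ n) :
    M (rightComb (n - 1)) =
      ∑ i ∈ Finset.Icc 1 (n - 1),
        ((-1 : ℤ)) ^ (i - 1) •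
          Finsupp.mapDomain (fun w => PBT.node (leftComb (i - 1)) w)
            (M (rightComb (n - i - 1))) := by
  have claimA' := Stmt10Aux.claimA μ hμrefl hμsum
  apply Finsupp.ext
  intro w
  have hRHS : (∑ i ∈ Finset.Icc 1 (n - 1),
        ((-1 : ℤ)) ^ (i - 1) •
          Finsupp.mapDomain (fun w => PBT.node (leftComb (i - 1)) w)
            (M (rightComb (n - i - 1)))) w
      = ∑ i ∈ Finset.Icc 1 (n - 1),
        ((-1 : ℤ)) ^ (i - 1) *
          (Finsupp.mapDomain (fun w => PBT.node (leftComb (i - 1)) w)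
            (M (rightComb (n - i - 1)))) w := by
    rw [Finsupp.coe_finset_sum, Finset.sum_apply]
    apply Finset.sum_congr rfl
    intro i _
    rw [Finsupp.smul_apply, smul_eq_mul]
  rw [hRHS, hM]
  have hrcn : leavesCount (rightComb (n-1)) = n := by
    rw [Stmt10Aux.leaves_rc]; omega
  by_cases hlw : leavesCount w = n
  · -- main case
    have hμw : μ w (rightComb (n-1)) = Stmt10Aux.f w := by
      have h := claimA' (Stmt10Aux.lw w) w le_rfl
      rw [hlw] at h
      exact h
    rw [hμw]
    cases w with
    | leaf => simp [leavesCount] at hlw; omega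
    | node l r =>
      have hLl := Stmt10Aux.leaves_pos l
      have hLr := Stmt10Aux.leaves_pos r
      have hlr : leavesCount l + leavesCount r = n := by
        rw [← hlw]; rfl
      by_cases hlc : l = leftComb (leavesCount l - 1)
      · -- l is a left comb, j := leavesCount l
        have hjmem : leavesCount l ∈ Finset.Icc 1 (n-1) := by
          rw [Finset.mem_Icc]; omega
        rw [Finset.sum_eq_single_of_mem (leavesCount l) hjmem]
        · -- the single term
          have hμr : μ r (rightComb (n - leavesCount l - 1)) = Stmt10Aux.f r := by
            have h := claimA' (Stmt10Aux.lw r) r le_rfl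
            have he : leavesCount r - 1 = n - leavesCount l - 1 := by omega
            rw [he] at h
            exact h
          have hmd : (Finsupp.mapDomain (fun v => PBT.node (leftComb (leavesCount l - 1)) v)
              (M (rightComb (n - leavesCount l - 1)))) (PBT.node l r)
              = Stmt10Aux.f r := by
            have hgw : PBT.node l r
                = (fun v => PBT.node (leftComb (leavesCount l - 1)) v) r := by
              simp only []
              rw [← hlc]
            rw [hgw, Finsupp.mapDomain_apply (Stmt10Aux.node_left_inj _), hM, hμr]
          rw [hmd]
          simp only [Stmt10Aux.f, if_pos hlc]
        · -- other terms vanish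
          intro i hi hine
          rw [Finset.mem_Icc] at hi
          have hnot : PBT.node l r ∉ Set.range (fun v => PBT.node (leftComb (i - 1)) v) := by
            rintro ⟨v, hv⟩
            simp only [] at hv
            have h12 := hv
            rw [PBT.node.injEq] at h12
            have h1 := h12.1
            have h2 : leavesCount l = i := by
              rw [← h1, Stmt10Aux.leaves_lc]; omega
            exact hine h2.symm
          rw [Finsupp.mapDomain_notin_range _ _ hnot]
          ring
      · -- l not a left comb: both sides zero
        have hfw : Stmt10Aux.f (PBT.node l r) = 0 := by
          rw [Stmt10Aux.f, if_neg hlc]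
        rw [hfw]
        symm
        apply Finset.sum_eq_zero
        intro i hi
        rw [Finset.mem_Icc] at hi
        have hnot : PBT.node l r ∉ Set.range (fun v => PBT.node (leftComb (i - 1)) v) := by
          rintro ⟨v, hv⟩
          simp only [] at hv
          have h12 := hv
          rw [PBT.node.injEq] at h12
          have h1 := h12.1
          apply hlc
          rw [← h1, Stmt10Aux.leaves_lc]
          congr 1
        rw [Finsupp.mapDomain_notin_range _ _ hnot]
        ring
  · -- leaves mismatch: both sides zero
    have hLHS : μ w (rightComb (n-1)) = 0 := by
      apply hμzero
      intro h
      exact hlw ((Stmt10Aux.tle_leaves h).trans hrcn)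
    rw [hLHS]
    symm
    apply Finset.sum_eq_zero
    intro i hi
    rw [Finset.mem_Icc] at hi
    by_cases hrange : w ∈ Set.range (fun v => PBT.node (leftComb (i - 1)) v)
    · obtain ⟨v, hv⟩ := hrange
      rw [← hv, Finsupp.mapDomain_apply (Stmt10Aux.node_left_inj _), hM]
      have hμv : μ v (rightComb (n - i - 1)) = 0 := by
        apply hμzero
        intro h
        have h1 := Stmt10Aux.tle_leaves h
        rw [Stmt10Aux.leaves_rc] at h1
        have h2 : leavesCount w = i + leavesCount v := by
          rw [← hv]
          show leavesCount (PBT.node (leftComb (i-1)) v) = _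
          rw [Stmt10Aux.leaves_node, Stmt10Aux.leaves_lc]
          omega
        have := Stmt10Aux.leaves_pos v
        omega
      rw [hμv]
      ring
    · rw [Finsupp.mapDomain_notin_range _ _ hrange]
      ring
end

section
/- Every tree z that is less than or equal to t₁ ⋋ t₂ in the Tamari order is of the form z = z₁ ⋋ z₂ with zᵢ having the same number of leaves as tᵢ and zᵢ ≤_T tᵢ, for i = 1, 2. -/
open Classical

lemma TStep.count {z z' : PBT} (h : TStep z z') : leavesCount z = leavesCount z' := by
  induction h with
  | rot a b c => simp [leavesCount, Nat.add_assoc]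
  | left c _ ih => simp [leavesCount, ih]
  | right a _ ih => simp [leavesCount, ih]

lemma tle.count {z z' : PBT} (h : tle z z') : leavesCount z = leavesCount z' := by
  induction h with
  | refl => rfl
  | tail _ hs ih => exact ih.trans hs.count

lemma tle.nodeLeft {a a' : PBT} (c : PBT) (h : tle a a') :
    tle (.node a c) (.node a' c) :=
  Relation.ReflTransGen.lift (fun x => PBT.node x c) (fun _ _ hs => TStep.left c hs) _ _ h

lemma tle.nodeRight (a : PBT) {c c' : PBT} (h : tle c c') :
    tle (.node a c) (.node a c') :=
  Relation.ReflTransGen.lift (fun x => PBT.node a x) (fun _ _ hs => TStep.right a hs) _ _ h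

lemma no_step_to_leaf {c : PBT} (h : TStep c .leaf) : False := by cases h

lemma step_lemma {u w z : PBT} (h : TStep z (lprod u w)) :
    ∃ z₁ z₂ : PBT, z = lprod z₁ z₂ ∧ tle z₁ u ∧ tle z₂ w := by
  induction w generalizing z with
  | leaf =>
    have hl : lprod u PBT.leaf = PBT.node u PBT.leaf := rfl
    rw [hl] at h
    cases h with
    | left c hs => exact ⟨_, PBT.leaf, rfl, Relation.ReflTransGen.single hs, .refl⟩
    | right a hs => exact absurd hs no_step_to_leaf
  | node l r ihl ihr =>
    have hl : lprod u (PBT.node l r) = PBT.node (lprod u l) r := rfl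
    rw [hl] at h
    cases h with
    | rot a b c =>
      refine ⟨u, PBT.node (PBT.node l b) c, rfl, .refl, ?_⟩
      exact Relation.ReflTransGen.single (TStep.rot l b c)
    | left c hs =>
      obtain ⟨z₁, z₂, rfl, h1, h2⟩ := ihl hs
      exact ⟨z₁, PBT.node z₂ r, rfl, h1, tle.nodeLeft r h2⟩
    | right a hs =>
      exact ⟨u, PBT.node l _, rfl, .refl, tle.nodeRight l (Relation.ReflTransGen.single hs)⟩

/-- Every tree `z ≤_T t₁ ⋋ t₂` is of the form `z = z₁ ⋋ z₂` with
`|zᵢ| = |tᵢ|` and `zᵢ ≤_T tᵢ` for `i = 1, 2`. -/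
theorem stmt13 (t₁ t₂ z : PBT) (h : tle z (lprod t₁ t₂)) :
    ∃ z₁ z₂ : PBT, z = lprod z₁ z₂ ∧
      leavesCount z₁ = leavesCount t₁ ∧ leavesCount z₂ = leavesCount t₂ ∧
      tle z₁ t₁ ∧ tle z₂ t₂ := by
  induction h using Relation.ReflTransGen.head_induction_on with
  | refl => exact ⟨t₁, t₂, rfl, rfl, rfl, .refl, .refl⟩
  | head hs _ ih =>
    obtain ⟨z₁', z₂', rfl, hc1, hc2, ht1, ht2⟩ := ih
    obtain ⟨z₁, z₂, rfl, h1, h2⟩ := step_lemma hs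
    exact ⟨z₁, z₂, rfl, h1.count.trans hc1, h2.count.trans hc2,
      h1.trans ht1, h2.trans ht2⟩
end
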